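/- arXiv:2502.12310 — 6 statements merged into one kernel-verified Lean document; each statement's English description precedes it below -/
import Mathlib

section
/- Let A₁, A₂ ∈ ℝ^{d×d} satisfy ρ(A₁) < 1 and ρ(A₂) < 1, let Q ∈ ℝ^{d×d} be symmetric positive definite, and let P₁, P₂ be symmetric positive semidefinite matrices satisfying the discrete Lyapunov equations P₁ = A₁ᵀP₁A₁ + Q and P₂ = A₂ᵀP₂A₂ + Q. Then ‖P₁ − P₂‖ ≤ (1/λ_min(Q))·‖P₁‖·‖P₂‖·(2‖A₂‖·‖A₁ − A₂‖ + ‖A₁ − A₂‖²). -/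
open Matrix
open scoped Kronecker

/-- Spectral norm (largest singular value) of a real matrix, realized as the
operator norm of the induced linear map between Euclidean spaces. -/
noncomputable def spNorm {m n : Type*} [Fintype m] [Fintype n] [DecidableEq n]
    (A : Matrix m n ℝ) : ℝ :=
  ‖(Matrix.toEuclideanLin A).toContinuousLinearMap‖

/-- Spectral radius of a real square matrix (computed over ℂ). -/
noncomputable def spRadius {n : Type*} [Fintype n] [DecidableEq n] (A : Matrix n n ℝ) : ENNReal :=
  spectralRadius ℂ (A.map Complex.ofReal)

/-- Frobenius norm of a real matrix. -/
noncomputable def frobNorm {m n : Type*} [Fintype m] [Fintype n] (A : Matrix m n ℝ) : ℝ :=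
  Real.sqrt (∑ i, ∑ j, (A i j) ^ 2)

/-- Smallest eigenvalue of a hermitian (real symmetric) matrix. -/
noncomputable def lamMin {n : Type*} [Fintype n] [DecidableEq n] {Q : Matrix n n ℝ}
    (hQ : Q.IsHermitian) : ℝ := ⨅ i, hQ.eigenvalues i

open scoped Matrix.Norms.L2Operator InnerProductSpace
open ContinuousLinearMap Filter

section Aux

variable {n : Type*} [Fintype n] [DecidableEq n]

/-- The continuous linear map on Euclidean space associated to a square real matrix. -/
noncomputable abbrev TT (M : Matrix n n ℝ) : EuclideanSpace ℝ n →L[ℝ] EuclideanSpace ℝ n :=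
  Matrix.toEuclideanCLM (𝕜 := ℝ) M

lemma spNorm_eq (M : Matrix n n ℝ) : spNorm M = ‖M‖ := rfl

lemma norm_TT (M : Matrix n n ℝ) : ‖TT M‖ = ‖M‖ := rfl

lemma TT_transpose (M : Matrix n n ℝ) : TT Mᵀ = ContinuousLinearMap.adjoint (TT M) := by
  rw [← ContinuousLinearMap.star_eq_adjoint, ← map_star, Matrix.star_eq_conjTranspose,
    conjTranspose_eq_transpose_of_trivial]

lemma TT_adjoint_eq {M : Matrix n n ℝ} (hM : M.IsHermitian) :
    ContinuousLinearMap.adjoint (TT M) = TT M := by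
  have h : Mᵀ = M := by rw [← conjTranspose_eq_transpose_of_trivial]; exact hM
  rw [← TT_transpose, h]

lemma TT_symm {M : Matrix n n ℝ} (hM : M.IsHermitian) (x y : EuclideanSpace ℝ n) :
    ⟪TT M x, y⟫_ℝ = ⟪x, TT M y⟫_ℝ := by
  rw [← TT_adjoint_eq hM, adjoint_inner_left, TT_adjoint_eq hM]

lemma inner_TT_conj (M N : Matrix n n ℝ) (x : EuclideanSpace ℝ n) :
    ⟪x, TT (Mᵀ * N * M) x⟫_ℝ = ⟪TT M x, TT N (TT M x)⟫_ℝ := by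
  have h : TT (Mᵀ * N * M) = TT Mᵀ * TT N * TT M := by
    have h1 := _root_.map_mul (Matrix.toEuclideanCLM (𝕜 := ℝ) (n := n)) (Mᵀ * N) M
    have h2 := _root_.map_mul (Matrix.toEuclideanCLM (𝕜 := ℝ) (n := n)) Mᵀ N
    rw [TT, h1, h2]
  rw [h, ContinuousLinearMap.mul_apply, ContinuousLinearMap.mul_apply, TT_transpose,
    real_inner_comm, adjoint_inner_left, real_inner_comm]

lemma q_nonneg {M : Matrix n n ℝ} (hM : M.PosSemidef) (x : EuclideanSpace ℝ n) :
    0 ≤ ⟪x, TT M x⟫_ℝ := by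
  have h := hM.dotProduct_mulVec_nonneg (WithLp.equiv 2 _ x)
  rw [EuclideanSpace.inner_eq_star_dotProduct]
  simpa [dotProduct_comm] using h

lemma abs_q_le (M : Matrix n n ℝ) (x : EuclideanSpace ℝ n) :
    |⟪x, TT M x⟫_ℝ| ≤ ‖M‖ * ‖x‖ ^ 2 := by
  calc |⟪x, TT M x⟫_ℝ| ≤ ‖x‖ * ‖TT M x‖ := abs_real_inner_le_norm _ _
    _ ≤ ‖x‖ * (‖TT M‖ * ‖x‖) := by
        exact mul_le_mul_of_nonneg_left ((TT M).le_opNorm x) (norm_nonneg x)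
    _ = ‖M‖ * ‖x‖ ^ 2 := by rw [norm_TT]; ring

lemma TT_eigen {Q : Matrix n n ℝ} (hQ : Q.IsHermitian) (i : n) :
    TT Q (hQ.eigenvectorBasis i) = hQ.eigenvalues i • hQ.eigenvectorBasis i := by
  have h := hQ.mulVec_eigenvectorBasis i
  have h2 : TT Q ((WithLp.equiv 2 _).symm ⇑(hQ.eigenvectorBasis i)) =
      (WithLp.equiv 2 _).symm (Q *ᵥ ⇑(hQ.eigenvectorBasis i)) := by
    rfl
  rw [h] at h2
  exact h2

lemma q_expand {Q : Matrix n n ℝ} (hQ : Q.IsHermitian) (x : EuclideanSpace ℝ n) :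
    ⟪x, TT Q x⟫_ℝ = ∑ i, hQ.eigenvalues i * (hQ.eigenvectorBasis.repr x i) ^ 2 := by
  have h1 : ⟪x, TT Q x⟫_ℝ
      = ⟪hQ.eigenvectorBasis.repr x, hQ.eigenvectorBasis.repr (TT Q x)⟫_ℝ := by
    rw [LinearIsometryEquiv.inner_map_map]
  rw [h1, PiLp.inner_apply]
  refine Finset.sum_congr rfl fun i _ => ?_
  have h2 : hQ.eigenvectorBasis.repr (TT Q x) i
      = hQ.eigenvalues i * hQ.eigenvectorBasis.repr x i := by
    rw [OrthonormalBasis.repr_apply_apply, OrthonormalBasis.repr_apply_apply,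
      ← TT_adjoint_eq hQ, adjoint_inner_right, TT_eigen hQ i, inner_smul_left]
    simp
  simp [h2, RCLike.inner_apply]
  ring

lemma norm_sq_expand {Q : Matrix n n ℝ} (hQ : Q.IsHermitian) (x : EuclideanSpace ℝ n) :
    ‖x‖ ^ 2 = ∑ i, (hQ.eigenvectorBasis.repr x i) ^ 2 := by
  rw [← hQ.eigenvectorBasis.repr.norm_map x, ← real_inner_self_eq_norm_sq, PiLp.inner_apply]
  simp [RCLike.inner_apply, sq]

lemma lamMin_smul_le {Q : Matrix n n ℝ} (hQ : Q.IsHermitian) (x : EuclideanSpace ℝ n) :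
    lamMin hQ * ‖x‖ ^ 2 ≤ ⟪x, TT Q x⟫_ℝ := by
  cases isEmpty_or_nonempty n with
  | inl h =>
    have hx : x = 0 := Subsingleton.elim _ _
    simp [hx]
  | inr h =>
    have hbdd : BddBelow (Set.range hQ.eigenvalues) := (Set.finite_range _).bddBelow
    rw [q_expand hQ x, norm_sq_expand hQ x, Finset.mul_sum]
    refine Finset.sum_le_sum fun i _ => ?_
    exact mul_le_mul_of_nonneg_right (ciInf_le hbdd i) (sq_nonneg _)

lemma lamMin_pos [Nonempty n] {Q : Matrix n n ℝ} (hQ : Q.PosDef) : 0 < lamMin hQ.1 := by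
  have hmem : lamMin hQ.1 ∈ Set.range hQ.1.eigenvalues :=
    (Set.range_nonempty _).csInf_mem (Set.finite_range _)
  obtain ⟨i, hi⟩ := hmem
  rw [← hi]
  exact hQ.eigenvalues_pos i

/-- Polarization: a symmetric operator whose quadratic form is bounded by `C‖x‖²`
has operator norm at most `C`. -/
lemma opNorm_le_of_quadratic {E : Type*} [NormedAddCommGroup E] [InnerProductSpace ℝ E]
    (S : E →L[ℝ] E) (hsymm : ∀ x y : E, ⟪S x, y⟫_ℝ = ⟪x, S y⟫_ℝ) {C : ℝ} (hC : 0 ≤ C)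
    (h : ∀ x : E, |⟪x, S x⟫_ℝ| ≤ C * ‖x‖ ^ 2) : ‖S‖ ≤ C := by
  have key : ∀ x y : E, |⟪x, S y⟫_ℝ| ≤ C / 2 * (‖x‖ ^ 2 + ‖y‖ ^ 2) := by
    intro x y
    have hxy : ⟪y, S x⟫_ℝ = ⟪x, S y⟫_ℝ := by rw [real_inner_comm]; exact hsymm x y
    have e1 : ⟪x + y, S (x + y)⟫_ℝ
        = ⟪x, S x⟫_ℝ + ⟪x, S y⟫_ℝ + ⟪y, S x⟫_ℝ + ⟪y, S y⟫_ℝ := by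
      rw [map_add, inner_add_left, inner_add_right, inner_add_right]; ring
    have e2 : ⟪x - y, S (x - y)⟫_ℝ
        = ⟪x, S x⟫_ℝ - ⟪x, S y⟫_ℝ - ⟪y, S x⟫_ℝ + ⟪y, S y⟫_ℝ := by
      rw [map_sub, inner_sub_left, inner_sub_right, inner_sub_right]; ring
    have h4 : 4 * ⟪x, S y⟫_ℝ = ⟪x + y, S (x + y)⟫_ℝ - ⟪x - y, S (x - y)⟫_ℝ := by
      rw [e1, e2]; linarith
    have hp : ‖x + y‖ ^ 2 + ‖x - y‖ ^ 2 = 2 * (‖x‖ ^ 2 + ‖y‖ ^ 2) := by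
      have hn1 := norm_add_sq_real x y
      have hn2 := norm_sub_sq_real x y
      linarith
    have b1 := h (x + y)
    have b2 := h (x - y)
    have habs : |4 * ⟪x, S y⟫_ℝ| ≤ C * ‖x + y‖ ^ 2 + C * ‖x - y‖ ^ 2 := by
      rw [h4]
      exact (abs_sub _ _).trans (add_le_add b1 b2)
    rw [abs_mul, abs_of_nonneg (by norm_num : (0:ℝ) ≤ 4)] at habs
    nlinarith [abs_nonneg ⟪x, S y⟫_ℝ]
  refine S.opNorm_le_bound hC fun y => ?_
  rcases eq_or_ne (S y) 0 with h0 | h0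
  · rw [h0, norm_zero]; positivity
  · have hSy : 0 < ‖S y‖ := norm_pos_iff.mpr h0
    have hy : 0 < ‖y‖ := by
      rcases eq_or_ne y 0 with hy0 | hy0
      · exfalso; apply h0; rw [hy0, map_zero]
      · exact norm_pos_iff.mpr hy0
    have hk := key ((‖y‖ / ‖S y‖) • S y) y
    rw [real_inner_smul_left, real_inner_self_eq_norm_sq, norm_smul, abs_mul] at hk
    have e3 : |‖y‖ / ‖S y‖| = ‖y‖ / ‖S y‖ := abs_of_nonneg (by positivity)
    rw [e3, abs_of_nonneg (sq_nonneg _)] at hk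
    have e4 : ‖y‖ / ‖S y‖ * ‖S y‖ ^ 2 = ‖y‖ * ‖S y‖ := by
      field_simp
    have e5 : (‖(‖y‖ / ‖S y‖)‖ * ‖S y‖) ^ 2 = ‖y‖ ^ 2 := by
      rw [Real.norm_eq_abs, e3]
      field_simp
    rw [e4, e5] at hk
    have : ‖S y‖ * ‖y‖ ≤ C * ‖y‖ * ‖y‖ := by nlinarith
    exact le_of_mul_le_mul_right (by nlinarith) hy

end Aux

/-- Lyapunov perturbation bound (Lemma: Lyapunov Perturbation). -/
theorem lyapunov_perturbation {d : ℕ} (A₁ A₂ Q P₁ P₂ : Matrix (Fin d) (Fin d) ℝ)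
    (hA₁ : spRadius A₁ < 1) (hA₂ : spRadius A₂ < 1)
    (hQ : Q.PosDef)
    (hP₁ : P₁.PosSemidef) (hP₂ : P₂.PosSemidef)
    (hL₁ : P₁ = A₁ᵀ * P₁ * A₁ + Q) (hL₂ : P₂ = A₂ᵀ * P₂ * A₂ + Q) :
    spNorm (P₁ - P₂) ≤ (1 / lamMin hQ.1) * spNorm P₁ * spNorm P₂ *
      (2 * spNorm A₂ * spNorm (A₁ - A₂) + spNorm (A₁ - A₂) ^ 2) := by
  classical
  rcases Nat.eq_zero_or_pos d with hd | hd
  · subst hd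
    have h0 : ∀ M : Matrix (Fin 0) (Fin 0) ℝ, spNorm M = 0 := by
      intro M
      rw [spNorm_eq, Subsingleton.elim M 0, norm_zero]
    simp [h0]
  haveI : Nonempty (Fin d) := ⟨⟨0, hd⟩⟩
  simp only [spNorm_eq]
  set lm := lamMin hQ.1 with hlm
  have hlmpos : 0 < lm := lamMin_pos hQ
  set En := A₁ - A₂ with hEn
  set R := Enᵀ * P₂ * A₂ + A₂ᵀ * P₂ * En + Enᵀ * P₂ * En with hRdef
  -- the perturbed Lyapunov equation for the difference
  have hΔeq : P₁ - P₂ = A₁ᵀ * (P₁ - P₂) * A₁ + R := by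
    rw [hRdef, hEn]
    nth_rewrite 1 [hL₁]
    nth_rewrite 1 [hL₂]
    simp only [Matrix.transpose_sub]
    noncomm_ring
  -- key quadratic-form bound
  have key : ∀ x : EuclideanSpace ℝ (Fin d),
      |⟪x, TT (P₁ - P₂) x⟫_ℝ| ≤ (1 / lm * ‖P₁‖ * ‖R‖) * ‖x‖ ^ 2 := by
    intro x
    set v : ℕ → EuclideanSpace ℝ (Fin d) := fun k => ((TT A₁) ^ k) x with hvdef
    have hv0 : v 0 = x := by simp [hvdef]
    have hvs : ∀ k, v (k + 1) = TT A₁ (v k) := by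
      intro k
      simp [hvdef, pow_succ']
      rw [← Function.iterate_succ_apply, Function.iterate_succ_apply']
    have hrecP : ∀ y : EuclideanSpace ℝ (Fin d),
        ⟪y, TT P₁ y⟫_ℝ = ⟪y, TT Q y⟫_ℝ + ⟪TT A₁ y, TT P₁ (TT A₁ y)⟫_ℝ := by
      intro y
      conv_lhs => rw [hL₁]
      have hadd := _root_.map_add (Matrix.toEuclideanCLM (𝕜 := ℝ) (n := Fin d)) (A₁ᵀ * P₁ * A₁) Q
      rw [TT, hadd, ContinuousLinearMap.add_apply, inner_add_right, inner_TT_conj]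
      ring
    have hrecΔ : ∀ y : EuclideanSpace ℝ (Fin d),
        ⟪y, TT (P₁ - P₂) y⟫_ℝ = ⟪y, TT R y⟫_ℝ + ⟪TT A₁ y, TT (P₁ - P₂) (TT A₁ y)⟫_ℝ := by
      intro y
      conv_lhs => rw [hΔeq]
      have hadd := _root_.map_add (Matrix.toEuclideanCLM (𝕜 := ℝ) (n := Fin d))
        (A₁ᵀ * (P₁ - P₂) * A₁) R
      rw [TT, hadd, ContinuousLinearMap.add_apply, inner_add_right, inner_TT_conj]
      ring
    have sumP : ∀ m : ℕ, ⟪x, TT P₁ x⟫_ℝ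
        = (∑ k ∈ Finset.range m, ⟪v k, TT Q (v k)⟫_ℝ) + ⟪v m, TT P₁ (v m)⟫_ℝ := by
      intro m
      induction m with
      | zero => simp [hv0]
      | succ m ih =>
        rw [Finset.sum_range_succ, ih, hrecP (v m), hvs m]
        ring
    have sumΔ : ∀ m : ℕ, ⟪x, TT (P₁ - P₂) x⟫_ℝ
        = (∑ k ∈ Finset.range m, ⟪v k, TT R (v k)⟫_ℝ) + ⟪v m, TT (P₁ - P₂) (v m)⟫_ℝ := by
      intro m
      induction m with
      | zero => simp [hv0]
      | succ m ih =>
        rw [Finset.sum_range_succ, ih, hrecΔ (v m), hvs m]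
        ring
    have hBsum : ∀ m : ℕ, ∑ k ∈ Finset.range m, ‖v k‖ ^ 2 ≤ ⟪x, TT P₁ x⟫_ℝ / lm := by
      intro m
      rw [le_div_iff₀ hlmpos]
      have h1 : (∑ k ∈ Finset.range m, ‖v k‖ ^ 2) * lm
          = ∑ k ∈ Finset.range m, lm * ‖v k‖ ^ 2 := by
        rw [Finset.sum_mul]
        exact Finset.sum_congr rfl fun k _ => by ring
      rw [h1]
      have h2 : ∑ k ∈ Finset.range m, lm * ‖v k‖ ^ 2
          ≤ ∑ k ∈ Finset.range m, ⟪v k, TT Q (v k)⟫_ℝ :=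
        Finset.sum_le_sum fun k _ => lamMin_smul_le hQ.1 (v k)
      have h3 := sumP m
      have h4 : 0 ≤ ⟪v m, TT P₁ (v m)⟫_ℝ := q_nonneg hP₁ (v m)
      linarith
    have hsummable : Summable (fun k => ‖v k‖ ^ 2) :=
      summable_of_sum_range_le (fun k => sq_nonneg _) hBsum
    have hzero : Tendsto (fun m => ‖v m‖ ^ 2) atTop (nhds 0) :=
      hsummable.tendsto_atTop_zero
    have habs : ∀ m : ℕ, |⟪x, TT (P₁ - P₂) x⟫_ℝ|
        ≤ ‖R‖ * (⟪x, TT P₁ x⟫_ℝ / lm) + ‖P₁ - P₂‖ * ‖v m‖ ^ 2 := by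
      intro m
      rw [sumΔ m]
      calc |(∑ k ∈ Finset.range m, ⟪v k, TT R (v k)⟫_ℝ) + ⟪v m, TT (P₁ - P₂) (v m)⟫_ℝ|
          ≤ |∑ k ∈ Finset.range m, ⟪v k, TT R (v k)⟫_ℝ| + |⟪v m, TT (P₁ - P₂) (v m)⟫_ℝ| :=
            abs_add_le _ _
        _ ≤ (∑ k ∈ Finset.range m, |⟪v k, TT R (v k)⟫_ℝ|) + ‖P₁ - P₂‖ * ‖v m‖ ^ 2 :=
            add_le_add (Finset.abs_sum_le_sum_abs _ _) (abs_q_le _ _)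
        _ ≤ (∑ k ∈ Finset.range m, ‖R‖ * ‖v k‖ ^ 2) + ‖P₁ - P₂‖ * ‖v m‖ ^ 2 :=
            add_le_add (Finset.sum_le_sum fun k _ => abs_q_le _ _) le_rfl
        _ = ‖R‖ * (∑ k ∈ Finset.range m, ‖v k‖ ^ 2) + ‖P₁ - P₂‖ * ‖v m‖ ^ 2 := by
            rw [Finset.mul_sum]
        _ ≤ ‖R‖ * (⟪x, TT P₁ x⟫_ℝ / lm) + ‖P₁ - P₂‖ * ‖v m‖ ^ 2 :=
            add_le_add (mul_le_mul_of_nonneg_left (hBsum m) (norm_nonneg _)) le_rfl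
    have hlim : |⟪x, TT (P₁ - P₂) x⟫_ℝ| ≤ ‖R‖ * (⟪x, TT P₁ x⟫_ℝ / lm) := by
      have ht : Tendsto (fun m => ‖R‖ * (⟪x, TT P₁ x⟫_ℝ / lm) + ‖P₁ - P₂‖ * ‖v m‖ ^ 2)
          atTop (nhds (‖R‖ * (⟪x, TT P₁ x⟫_ℝ / lm) + ‖P₁ - P₂‖ * 0)) :=
        tendsto_const_nhds.add (tendsto_const_nhds.mul hzero)
      rw [mul_zero, add_zero] at ht
      exact ge_of_tendsto ht (Eventually.of_forall habs)
    have hPx : ⟪x, TT P₁ x⟫_ℝ ≤ ‖P₁‖ * ‖x‖ ^ 2 :=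
      (le_abs_self _).trans (abs_q_le _ _)
    calc |⟪x, TT (P₁ - P₂) x⟫_ℝ| ≤ ‖R‖ * (⟪x, TT P₁ x⟫_ℝ / lm) := hlim
      _ ≤ ‖R‖ * (‖P₁‖ * ‖x‖ ^ 2 / lm) := by gcongr
      _ = (1 / lm * ‖P₁‖ * ‖R‖) * ‖x‖ ^ 2 := by field_simp
  have hΔherm : (P₁ - P₂).IsHermitian := hP₁.1.sub hP₂.1
  have hC : 0 ≤ 1 / lm * ‖P₁‖ * ‖R‖ := by positivity
  have hnorm : ‖P₁ - P₂‖ ≤ 1 / lm * ‖P₁‖ * ‖R‖ := by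
    rw [← norm_TT]
    exact opNorm_le_of_quadratic (TT (P₁ - P₂)) (fun x y => TT_symm hΔherm x y) hC key
  have htrans : ∀ M : Matrix (Fin d) (Fin d) ℝ, ‖Mᵀ‖ = ‖M‖ := by
    intro M
    rw [← conjTranspose_eq_transpose_of_trivial, Matrix.l2_opNorm_conjTranspose]
  have h1 : ‖Enᵀ * P₂ * A₂‖ ≤ ‖En‖ * ‖P₂‖ * ‖A₂‖ := by
    calc ‖Enᵀ * P₂ * A₂‖ ≤ ‖Enᵀ * P₂‖ * ‖A₂‖ := Matrix.l2_opNorm_mul _ _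
      _ ≤ (‖Enᵀ‖ * ‖P₂‖) * ‖A₂‖ :=
          mul_le_mul_of_nonneg_right (Matrix.l2_opNorm_mul _ _) (norm_nonneg _)
      _ = ‖En‖ * ‖P₂‖ * ‖A₂‖ := by rw [htrans]
  have h2 : ‖A₂ᵀ * P₂ * En‖ ≤ ‖A₂‖ * ‖P₂‖ * ‖En‖ := by
    calc ‖A₂ᵀ * P₂ * En‖ ≤ ‖A₂ᵀ * P₂‖ * ‖En‖ := Matrix.l2_opNorm_mul _ _
      _ ≤ (‖A₂ᵀ‖ * ‖P₂‖) * ‖En‖ :=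
          mul_le_mul_of_nonneg_right (Matrix.l2_opNorm_mul _ _) (norm_nonneg _)
      _ = ‖A₂‖ * ‖P₂‖ * ‖En‖ := by rw [htrans]
  have h3 : ‖Enᵀ * P₂ * En‖ ≤ ‖En‖ * ‖P₂‖ * ‖En‖ := by
    calc ‖Enᵀ * P₂ * En‖ ≤ ‖Enᵀ * P₂‖ * ‖En‖ := Matrix.l2_opNorm_mul _ _
      _ ≤ (‖Enᵀ‖ * ‖P₂‖) * ‖En‖ :=
          mul_le_mul_of_nonneg_right (Matrix.l2_opNorm_mul _ _) (norm_nonneg _)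
      _ = ‖En‖ * ‖P₂‖ * ‖En‖ := by rw [htrans]
  have hRb : ‖R‖ ≤ ‖P₂‖ * (2 * ‖A₂‖ * ‖En‖ + ‖En‖ ^ 2) := by
    calc ‖R‖ ≤ ‖Enᵀ * P₂ * A₂‖ + ‖A₂ᵀ * P₂ * En‖ + ‖Enᵀ * P₂ * En‖ := by
          rw [hRdef]
          exact norm_add₃_le
      _ ≤ ‖En‖ * ‖P₂‖ * ‖A₂‖ + ‖A₂‖ * ‖P₂‖ * ‖En‖ + ‖En‖ * ‖P₂‖ * ‖En‖ :=
          add_le_add (add_le_add h1 h2) h3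
      _ = ‖P₂‖ * (2 * ‖A₂‖ * ‖En‖ + ‖En‖ ^ 2) := by ring
  calc ‖P₁ - P₂‖ ≤ 1 / lm * ‖P₁‖ * ‖R‖ := hnorm
    _ ≤ 1 / lm * ‖P₁‖ * (‖P₂‖ * (2 * ‖A₂‖ * ‖En‖ + ‖En‖ ^ 2)) :=
        mul_le_mul_of_nonneg_left hRb (by positivity)
    _ = 1 / lm * ‖P₁‖ * ‖P₂‖ * (2 * ‖A₂‖ * ‖En‖ + ‖En‖ ^ 2) := by ring
end

section
/- Let A ∈ ℝ^{n×n}, B ∈ ℝ^{n×m}, and let K₁, K₂ ∈ ℝ^{m×n} be gains with ρ(A + BK₁) < 1 and ρ(A + BK₂) < 1, and let Σ₁, Σ₂ be the positive semidefinite matrices satisfying Σᵢ = (A + BKᵢ)Σᵢ(A + BKᵢ)ᵀ + I for i = 1, 2. If ‖B(K₁ − K₂)‖ ≤ 1/(12·‖Σ₁‖^{5/2}), then Σ₂ ⪰ (1/2)·Σ₁. -/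
set_option synthInstance.maxHeartbeats 1000000
set_option maxHeartbeats 1000000
open Filter


open Matrix
open scoped Kronecker

namespace CovAux

variable {n : ℕ}

noncomputable def vnorm {n : ℕ} (x : Fin n → ℝ) : ℝ := ‖(WithLp.equiv 2 (Fin n → ℝ)).symm x‖

lemma vnorm_nonneg (x : Fin n → ℝ) : 0 ≤ vnorm x := norm_nonneg _

lemma dot_self_eq (x : Fin n → ℝ) : x ⬝ᵥ x = vnorm x ^ 2 := by
  have := real_inner_self_eq_norm_sq ((WithLp.equiv 2 (Fin n → ℝ)).symm x)
  rw [vnorm, ← this]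
  simp only [PiLp.inner_apply, RCLike.inner_apply, dotProduct]
  simp

lemma abs_dot_le (x y : Fin n → ℝ) : |x ⬝ᵥ y| ≤ vnorm x * vnorm y := by
  have := abs_real_inner_le_norm ((WithLp.equiv 2 (Fin n → ℝ)).symm x)
    ((WithLp.equiv 2 (Fin n → ℝ)).symm y)
  simpa [vnorm, PiLp.inner_apply, dotProduct, RCLike.inner_apply, mul_comm] using this

lemma dot_le (x y : Fin n → ℝ) : x ⬝ᵥ y ≤ vnorm x * vnorm y :=
  (le_abs_self _).trans (abs_dot_le x y)

lemma spNorm_nonneg {m : Type*} [Fintype m] (A : Matrix m (Fin n) ℝ) : 0 ≤ spNorm A :=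
  norm_nonneg _

lemma vnorm_mulVec_le (A : Matrix (Fin n) (Fin n) ℝ) (x : Fin n → ℝ) :
    vnorm (A *ᵥ x) ≤ spNorm A * vnorm x := by
  have h := (Matrix.toEuclideanLin A).toContinuousLinearMap.le_opNorm
    ((WithLp.equiv 2 (Fin n → ℝ)).symm x)
  simpa [vnorm, spNorm, Matrix.toEuclideanLin_apply_piLp_toLp] using h

lemma conj_dot (P S : Matrix (Fin n) (Fin n) ℝ) (x : Fin n → ℝ) :
    x ⬝ᵥ (P * S * Pᵀ) *ᵥ x = (Pᵀ *ᵥ x) ⬝ᵥ (S *ᵥ (Pᵀ *ᵥ x)) := by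
  rw [← Matrix.mulVec_mulVec, ← Matrix.mulVec_mulVec, Matrix.dotProduct_mulVec x P,
    ← Matrix.mulVec_transpose]

lemma dot_transpose (N : Matrix (Fin n) (Fin n) ℝ) (x : Fin n → ℝ) :
    x ⬝ᵥ Nᵀ *ᵥ x = x ⬝ᵥ N *ᵥ x := by
  rw [Matrix.mulVec_transpose, Matrix.dotProduct_mulVec, dotProduct_comm]

open scoped Matrix.Norms.L2Operator in
lemma spNorm_eq_l2 (A : Matrix (Fin n) (Fin n) ℝ) : spNorm A = ‖A‖ := rfl

open scoped Matrix.Norms.L2Operator in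
lemma spNorm_transpose (A : Matrix (Fin n) (Fin n) ℝ) : spNorm Aᵀ = spNorm A := by
  rw [spNorm_eq_l2, spNorm_eq_l2, ← Matrix.conjTranspose_eq_transpose_of_trivial,
    Matrix.l2_opNorm_conjTranspose]




open scoped Matrix.Norms.L2Operator in
lemma spNorm_le_complex (M : Matrix (Fin n) (Fin n) ℝ) :
    spNorm M ≤ ‖M.map Complex.ofReal‖ := by
  apply ContinuousLinearMap.opNorm_le_bound _ (norm_nonneg _)
  intro y
  set x : Fin n → ℝ := (WithLp.equiv 2 (Fin n → ℝ)) y with hx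
  have hy : y = (WithLp.equiv 2 (Fin n → ℝ)).symm x := rfl
  have hmv : (M.map Complex.ofReal) *ᵥ (fun i => (x i : ℂ)) =
      fun i => ((M *ᵥ x) i : ℂ) := by
    funext i
    simp [Matrix.mulVec, dotProduct, Matrix.map_apply]
  have h2 := Matrix.l2_opNorm_mulVec (M.map Complex.ofReal)
    ((WithLp.equiv 2 (Fin n → ℂ)).symm (fun i => (x i : ℂ)))
  have hnz : ‖(WithLp.equiv 2 (Fin n → ℂ)).symm (fun i => (x i : ℂ))‖ = ‖y‖ := by
    rw [hy]
    rw [EuclideanSpace.norm_eq, EuclideanSpace.norm_eq]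
    congr 1
    apply Finset.sum_congr rfl
    intro i _
    simp
  replace h2 : ‖(WithLp.equiv 2 (Fin n → ℂ)).symm ((M.map Complex.ofReal) *ᵥ fun i => (x i : ℂ))‖ ≤
      ‖M.map Complex.ofReal‖ * ‖(WithLp.equiv 2 (Fin n → ℂ)).symm fun i => (x i : ℂ)‖ := h2
  rw [hmv, hnz] at h2
  have hlhs : ‖(Matrix.toEuclideanLin M).toContinuousLinearMap y‖ =
      ‖(WithLp.equiv 2 (Fin n → ℝ)).symm (M *ᵥ x)‖ := by
    rw [hy]
    congr 1
  rw [hlhs]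
  refine le_trans (le_of_eq ?_) h2
  rw [EuclideanSpace.norm_eq, EuclideanSpace.norm_eq]
  congr 1
  apply Finset.sum_congr rfl
  intro i _
  simp

open scoped Matrix.Norms.L2Operator in
lemma spNorm_pow_tendsto (L : Matrix (Fin n) (Fin n) ℝ) (hr : spRadius L < 1) :
    Tendsto (fun N => spNorm (L ^ N)) atTop (nhds 0) := by
  haveI : CompleteSpace (Matrix (Fin n) (Fin n) ℂ) := FiniteDimensional.complete ℂ _
  set a : Matrix (Fin n) (Fin n) ℂ := L.map Complex.ofReal with ha
  have hpow : ∀ N : ℕ, (L ^ N).map Complex.ofReal = a ^ N := by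
    intro N
    have := map_pow ((Complex.ofRealHom : ℝ →+* ℂ).mapMatrix (m := Fin n)) L N
    exact this
  obtain ⟨r, hr1, hr2⟩ := exists_between hr
  have hgel := spectrum.pow_nnnorm_pow_one_div_tendsto_nhds_spectralRadius a
  have hev : ∀ᶠ N : ℕ in atTop, (‖a ^ N‖₊ : ENNReal) ^ (1 / (N : ℝ)) < r :=
    hgel.eventually_lt_const hr1
  have hbound : ∀ᶠ N : ℕ in atTop, spNorm (L ^ N) ≤ (r.toReal) ^ N := by
    filter_upwards [hev, eventually_ge_atTop 1] with N hN hN1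
    have hNne : (N : ℝ) ≠ 0 := by positivity
    have h1 : (‖a ^ N‖₊ : ENNReal) < r ^ N := by
      have := ENNReal.rpow_lt_rpow hN (by positivity : (0:ℝ) < (N:ℝ))
      rwa [← ENNReal.rpow_mul, one_div, inv_mul_cancel₀ hNne, ENNReal.rpow_one,
        ENNReal.rpow_natCast] at this
    have hrtop : r ≠ ⊤ := (hr2.trans_le le_top).ne
    have h2 : ‖a ^ N‖ ≤ r.toReal ^ N := by
      have := ENNReal.toReal_mono (by simp [hrtop]) h1.le
      simpa [ENNReal.toReal_pow] using this
    calc spNorm (L ^ N) ≤ ‖(L ^ N).map Complex.ofReal‖ := spNorm_le_complex _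
      _ = ‖a ^ N‖ := by rw [hpow]
      _ ≤ r.toReal ^ N := h2
  have hrt1 : r.toReal < 1 := by
    rw [← ENNReal.toReal_one]
    exact ENNReal.toReal_strict_mono (by simp) hr2
  refine squeeze_zero' (Eventually.of_forall fun N => norm_nonneg _) hbound ?_
  exact tendsto_pow_atTop_nhds_zero_of_lt_one ENNReal.toReal_nonneg hrt1


open Filter in
lemma lyap {L X M : Matrix (Fin n) (Fin n) ℝ}
    (hr : spRadius L < 1) (hX : X.IsHermitian)
    (hM : ∀ x, 0 ≤ x ⬝ᵥ M *ᵥ x)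
    (hrec : X = L * X * Lᵀ + M) : X.PosSemidef := by
  refine Matrix.PosSemidef.of_dotProduct_mulVec_nonneg hX fun x => ?_
  have hsx : star x = x := by
    funext i; simp
  rw [hsx]
  have step : ∀ z : Fin n → ℝ, (Lᵀ *ᵥ z) ⬝ᵥ X *ᵥ (Lᵀ *ᵥ z) ≤ z ⬝ᵥ X *ᵥ z := by
    intro z
    conv_rhs => rw [hrec]
    rw [Matrix.add_mulVec, dotProduct_add, conj_dot]
    have := hM z
    linarith
  have key : ∀ N : ℕ, ((Lᵀ) ^ N *ᵥ x) ⬝ᵥ X *ᵥ ((Lᵀ) ^ N *ᵥ x) ≤ x ⬝ᵥ X *ᵥ x := by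
    intro N
    induction N with
    | zero => simp [Matrix.one_mulVec]
    | succ k ih =>
      have hp : (Lᵀ) ^ (k+1) *ᵥ x = Lᵀ *ᵥ ((Lᵀ) ^ k *ᵥ x) := by
        rw [pow_succ', Matrix.mulVec_mulVec]
      rw [hp]
      exact (step _).trans ih
  have bnd : ∀ N : ℕ, -(spNorm X * (spNorm (L ^ N) * vnorm x) ^ 2) ≤ x ⬝ᵥ X *ᵥ x := by
    intro N
    set z := (Lᵀ) ^ N *ᵥ x with hz
    have h1 : -(vnorm z * (spNorm X * vnorm z)) ≤ z ⬝ᵥ X *ᵥ z := by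
      have h2 : |z ⬝ᵥ X *ᵥ z| ≤ vnorm z * vnorm (X *ᵥ z) := abs_dot_le _ _
      have h3 : vnorm (X *ᵥ z) ≤ spNorm X * vnorm z := vnorm_mulVec_le _ _
      have h4 := neg_abs_le (z ⬝ᵥ X *ᵥ z)
      have h5 : vnorm z * vnorm (X *ᵥ z) ≤ vnorm z * (spNorm X * vnorm z) :=
        mul_le_mul_of_nonneg_left h3 (vnorm_nonneg _)
      linarith
    have h6 : vnorm z ≤ spNorm (L ^ N) * vnorm x := by
      rw [hz, ← Matrix.transpose_pow]
      have := vnorm_mulVec_le ((L ^ N)ᵀ) x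
      rwa [spNorm_transpose] at this
    have h7 : -(spNorm X * (spNorm (L ^ N) * vnorm x) ^ 2) ≤ -(vnorm z * (spNorm X * vnorm z)) := by
      have hnn : 0 ≤ vnorm z := vnorm_nonneg _
      have hX0 : 0 ≤ spNorm X := spNorm_nonneg _
      have h8 : vnorm z * vnorm z ≤ (spNorm (L ^ N) * vnorm x) * (spNorm (L ^ N) * vnorm x) :=
        mul_le_mul h6 h6 hnn (mul_nonneg (spNorm_nonneg _) (vnorm_nonneg _))
      nlinarith [h8, hX0]
    exact le_trans (le_trans h7 h1) (key N)
  have ht : Tendsto (fun N : ℕ => -(spNorm X * (spNorm (L ^ N) * vnorm x) ^ 2)) atTop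
      (nhds (-(spNorm X * ((0 : ℝ) * vnorm x) ^ 2))) := by
    exact ((((spNorm_pow_tendsto L hr).mul_const (vnorm x)).pow 2).const_mul (spNorm X)).neg
  have hle := le_of_tendsto ht (Eventually.of_forall bnd)
  simpa using hle

end CovAux



open CovAux

/-- Covariance lower bound under gain perturbation. -/
theorem cov_lower_bound {n m : ℕ} (A : Matrix (Fin n) (Fin n) ℝ) (B : Matrix (Fin n) (Fin m) ℝ)
    (K₁ K₂ : Matrix (Fin m) (Fin n) ℝ) (S₁ S₂ : Matrix (Fin n) (Fin n) ℝ)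
    (h₁ : spRadius (A + B * K₁) < 1) (h₂ : spRadius (A + B * K₂) < 1)
    (hS₁ : S₁.PosSemidef) (hS₂ : S₂.PosSemidef)
    (hE₁ : S₁ = (A + B * K₁) * S₁ * (A + B * K₁)ᵀ + 1)
    (hE₂ : S₂ = (A + B * K₂) * S₂ * (A + B * K₂)ᵀ + 1)
    (hB : spNorm (B * (K₁ - K₂)) ≤ 1 / (12 * spNorm S₁ ^ ((5 : ℝ) / 2))) :
    (S₂ - (1 / 2 : ℝ) • S₁).PosSemidef := by
  rcases Nat.eq_zero_or_pos n with hn | hn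
  · subst hn
    refine Matrix.PosSemidef.of_dotProduct_mulVec_nonneg ?_ fun x => ?_
    · funext i j; exact i.elim0
    · simp [dotProduct]
  set L₁ := A + B * K₁ with hL₁
  set L₂ := A + B * K₂ with hL₂
  set Δ := B * (K₁ - K₂) with hΔ
  have hΔeq : Δ = L₁ - L₂ := by rw [hΔ, hL₁, hL₂, Matrix.mul_sub]; abel
  have hL₂eq : L₂ = L₁ - Δ := by rw [hΔeq]; abel
  have hS₁T : S₁ᵀ = S₁ := by
    rw [← Matrix.conjTranspose_eq_transpose_of_trivial]; exact hS₁.1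
  have e₁ : L₁ * S₁ * L₁ᵀ = S₁ - 1 := eq_sub_of_add_eq hE₁.symm
  have e₂ : L₂ * S₂ * L₂ᵀ = S₂ - 1 := eq_sub_of_add_eq hE₂.symm
  have hq1 : ∀ x : Fin n → ℝ, 0 ≤ x ⬝ᵥ S₁ *ᵥ x := fun x => by
    have h := hS₁.dotProduct_mulVec_nonneg x; rwa [star_trivial] at h
  have hS1ge : ∀ z : Fin n → ℝ, z ⬝ᵥ z ≤ z ⬝ᵥ S₁ *ᵥ z := by
    intro z
    have hpsd : (L₁ * S₁ * L₁ᵀ).PosSemidef := by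
      have h := hS₁.mul_mul_conjTranspose_same L₁
      rwa [Matrix.conjTranspose_eq_transpose_of_trivial] at h
    have h := hpsd.dotProduct_mulVec_nonneg z
    rw [star_trivial, e₁, Matrix.sub_mulVec, dotProduct_sub, Matrix.one_mulVec] at h
    linarith
  set s := spNorm S₁ with hs
  have hsS : ∀ z : Fin n → ℝ, z ⬝ᵥ S₁ *ᵥ z ≤ s * (vnorm z) ^ 2 := by
    intro z
    calc z ⬝ᵥ S₁ *ᵥ z ≤ vnorm z * vnorm (S₁ *ᵥ z) := dot_le _ _
      _ ≤ vnorm z * (s * vnorm z) :=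
        mul_le_mul_of_nonneg_left (vnorm_mulVec_le _ _) (vnorm_nonneg _)
      _ = s * (vnorm z) ^ 2 := by ring
  have hs1 : 1 ≤ s := by
    set e : Fin n → ℝ := Pi.single ⟨0, hn⟩ 1 with he
    have hee : e ⬝ᵥ e = 1 := by simp [he, dotProduct, Pi.single_apply]
    have h1 := hS1ge e
    have h2 := hsS e
    have hv : (vnorm e) ^ 2 = 1 := by rw [← dot_self_eq, hee]
    rw [hv] at h2
    linarith
  have hspos : (0:ℝ) < s := by linarith
  have hLT : ∀ x : Fin n → ℝ, vnorm (L₁ᵀ *ᵥ x) ≤ Real.sqrt s * vnorm x := by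
    intro x
    have ha : (L₁ᵀ *ᵥ x) ⬝ᵥ (L₁ᵀ *ᵥ x) ≤ (L₁ᵀ *ᵥ x) ⬝ᵥ S₁ *ᵥ (L₁ᵀ *ᵥ x) := hS1ge _
    have hb : x ⬝ᵥ (L₁ * S₁ * L₁ᵀ) *ᵥ x = (L₁ᵀ *ᵥ x) ⬝ᵥ (S₁ *ᵥ (L₁ᵀ *ᵥ x)) := conj_dot _ _ _
    have hc : x ⬝ᵥ (L₁ * S₁ * L₁ᵀ) *ᵥ x ≤ x ⬝ᵥ S₁ *ᵥ x := by
      rw [e₁, Matrix.sub_mulVec, dotProduct_sub, Matrix.one_mulVec]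
      have hxx : x ⬝ᵥ x = (vnorm x) ^ 2 := dot_self_eq x
      nlinarith [vnorm_nonneg x]
    have hd := hsS x
    have h1 : (vnorm (L₁ᵀ *ᵥ x)) ^ 2 ≤ s * (vnorm x) ^ 2 := by
      rw [← dot_self_eq]
      calc (L₁ᵀ *ᵥ x) ⬝ᵥ (L₁ᵀ *ᵥ x) ≤ (L₁ᵀ *ᵥ x) ⬝ᵥ S₁ *ᵥ (L₁ᵀ *ᵥ x) := ha
        _ = x ⬝ᵥ (L₁ * S₁ * L₁ᵀ) *ᵥ x := hb.symm
        _ ≤ x ⬝ᵥ S₁ *ᵥ x := hc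
        _ ≤ s * (vnorm x) ^ 2 := hd
    have h2 := Real.sqrt_le_sqrt h1
    rwa [Real.sqrt_sq (vnorm_nonneg _), Real.sqrt_mul hspos.le,
      Real.sqrt_sq (vnorm_nonneg _)] at h2
  set ε := spNorm Δ with hε
  have hε0 : 0 ≤ ε := spNorm_nonneg _
  have hsplit : s ^ ((5:ℝ)/2) = s ^ ((3:ℝ)/2) * s := by
    rw [show ((5:ℝ)/2) = (3:ℝ)/2 + 1 by norm_num, Real.rpow_add hspos, Real.rpow_one]
  have hsqrt : s * Real.sqrt s = s ^ ((3:ℝ)/2) := by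
    rw [Real.sqrt_eq_rpow]
    nth_rewrite 1 [← Real.rpow_one s]
    rw [← Real.rpow_add hspos]
    norm_num
  have h32pos : (0:ℝ) < s ^ ((3:ℝ)/2) := Real.rpow_pos_of_pos hspos _
  have hεs : ε * s ^ ((3:ℝ)/2) ≤ 1 / 12 := by
    have hpos' : (0:ℝ) < 12 * s ^ ((5:ℝ)/2) := by positivity
    have h1 : ε * (12 * s ^ ((5:ℝ)/2)) ≤ 1 := by
      have := mul_le_mul_of_nonneg_right hB hpos'.le
      rwa [one_div, inv_mul_cancel₀ hpos'.ne'] at this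
    rw [hsplit] at h1
    nlinarith
  -- bound the cross term
  have hcross : ∀ x : Fin n → ℝ, |x ⬝ᵥ (Δ * S₁ * L₁ᵀ) *ᵥ x| ≤ (1/12) * (vnorm x) ^ 2 := by
    intro x
    have hmv : (Δ * S₁ * L₁ᵀ) *ᵥ x = Δ *ᵥ (S₁ *ᵥ (L₁ᵀ *ᵥ x)) := by
      rw [← Matrix.mulVec_mulVec, ← Matrix.mulVec_mulVec]
    have h1 : |x ⬝ᵥ (Δ * S₁ * L₁ᵀ) *ᵥ x| ≤ vnorm x * vnorm ((Δ * S₁ * L₁ᵀ) *ᵥ x) := abs_dot_le _ _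
    have h2 : vnorm ((Δ * S₁ * L₁ᵀ) *ᵥ x) ≤ ε * (s * (Real.sqrt s * vnorm x)) := by
      rw [hmv]
      calc vnorm (Δ *ᵥ (S₁ *ᵥ (L₁ᵀ *ᵥ x))) ≤ ε * vnorm (S₁ *ᵥ (L₁ᵀ *ᵥ x)) := vnorm_mulVec_le _ _
        _ ≤ ε * (s * vnorm (L₁ᵀ *ᵥ x)) := by
            refine mul_le_mul_of_nonneg_left ?_ hε0
            exact vnorm_mulVec_le _ _
        _ ≤ ε * (s * (Real.sqrt s * vnorm x)) := by
            refine mul_le_mul_of_nonneg_left ?_ hε0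
            exact mul_le_mul_of_nonneg_left (hLT x) hspos.le
    have h3 : ε * (s * (Real.sqrt s * vnorm x)) * vnorm x = (ε * s ^ ((3:ℝ)/2)) * (vnorm x) ^ 2 := by
      rw [← hsqrt]; ring
    have hvx := vnorm_nonneg x
    have h4 : vnorm x * vnorm ((Δ * S₁ * L₁ᵀ) *ᵥ x) ≤ (ε * s ^ ((3:ℝ)/2)) * (vnorm x) ^ 2 := by
      rw [← h3]
      nlinarith [h2, hvx]
    have h5 : (ε * s ^ ((3:ℝ)/2)) * (vnorm x) ^ 2 ≤ (1/12) * (vnorm x) ^ 2 := by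
      nlinarith [hεs, sq_nonneg (vnorm x)]
    linarith
  -- the driving term
  set M' : Matrix (Fin n) (Fin n) ℝ := 1 - Δ * S₁ * L₁ᵀ - L₁ * S₁ * Δᵀ + Δ * S₁ * Δᵀ with hM'
  have hMpos : ∀ x : Fin n → ℝ, 0 ≤ x ⬝ᵥ M' *ᵥ x := by
    intro x
    have hexp : x ⬝ᵥ M' *ᵥ x = x ⬝ᵥ x - x ⬝ᵥ (Δ * S₁ * L₁ᵀ) *ᵥ x - x ⬝ᵥ (L₁ * S₁ * Δᵀ) *ᵥ x
        + x ⬝ᵥ (Δ * S₁ * Δᵀ) *ᵥ x := by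
      rw [hM', Matrix.add_mulVec, Matrix.sub_mulVec, Matrix.sub_mulVec, Matrix.one_mulVec,
        dotProduct_add, dotProduct_sub, dotProduct_sub]
    have htr : x ⬝ᵥ (L₁ * S₁ * Δᵀ) *ᵥ x = x ⬝ᵥ (Δ * S₁ * L₁ᵀ) *ᵥ x := by
      have : L₁ * S₁ * Δᵀ = (Δ * S₁ * L₁ᵀ)ᵀ := by
        rw [Matrix.transpose_mul (Δ * S₁) L₁ᵀ, Matrix.transpose_mul Δ S₁,
          Matrix.transpose_transpose, hS₁T, Matrix.mul_assoc]
      rw [this, dot_transpose]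
    have h4 : 0 ≤ x ⬝ᵥ (Δ * S₁ * Δᵀ) *ᵥ x := by
      rw [conj_dot]
      exact hq1 _
    have hxx : x ⬝ᵥ x = (vnorm x) ^ 2 := dot_self_eq x
    have hc := hcross x
    have hc1 := abs_le.mp hc
    rw [hexp, htr, hxx]
    linarith [hc1.1, hc1.2]
  have hYherm : (S₂ + S₂ - S₁).IsHermitian := (hS₂.1.add hS₂.1).sub hS₁.1
  have hrecY : S₂ + S₂ - S₁ = L₂ * (S₂ + S₂ - S₁) * L₂ᵀ + M' := by
    have expand : L₂ * (S₂ + S₂ - S₁) * L₂ᵀ =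
        L₂ * S₂ * L₂ᵀ + L₂ * S₂ * L₂ᵀ - L₂ * S₁ * L₂ᵀ := by noncomm_ring
    have key2 : L₂ * S₁ * L₂ᵀ = S₁ - 1 - Δ * S₁ * L₁ᵀ - L₁ * S₁ * Δᵀ + Δ * S₁ * Δᵀ := by
      rw [hL₂eq]
      have hexp2 : (L₁ - Δ) * S₁ * (L₁ - Δ)ᵀ =
          L₁ * S₁ * L₁ᵀ - Δ * S₁ * L₁ᵀ - L₁ * S₁ * Δᵀ + Δ * S₁ * Δᵀ := by
        rw [Matrix.transpose_sub]; noncomm_ring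
      rw [hexp2, e₁]
    rw [expand, e₂, key2, hM']
    abel
  have hY : (S₂ + S₂ - S₁).PosSemidef := lyap h₂ hYherm hMpos hrecY
  refine Matrix.PosSemidef.of_dotProduct_mulVec_nonneg ?_ fun x => ?_
  · refine hS₂.1.sub ?_
    show ((1/2:ℝ) • S₁)ᴴ = (1/2:ℝ) • S₁
    rw [Matrix.conjTranspose_smul, star_trivial, hS₁.1]
  · rw [star_trivial]
    have hY2 := hY.dotProduct_mulVec_nonneg x
    rw [star_trivial] at hY2
    have hgl : x ⬝ᵥ (S₂ - (1/2:ℝ) • S₁) *ᵥ x = (1/2) * (x ⬝ᵥ (S₂ + S₂ - S₁) *ᵥ x) := by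
      rw [Matrix.sub_mulVec, Matrix.sub_mulVec, Matrix.add_mulVec, Matrix.smul_mulVec,
        dotProduct_sub, dotProduct_sub, dotProduct_add,
        dotProduct_smul]
      simp only [smul_eq_mul]
      ring
    rw [hgl]
    linarith
end

section
/- Let (A₁, B₁) and (A₂, B₂) be two systems with A₁, A₂ ∈ ℝ^{n×n} and B₁, B₂ ∈ ℝ^{n×m}, both with state-cost matrix Q symmetric with Q ⪰ I and input cost R = I. Let P₁, P₂ be DARE solutions for (A₁, B₁, Q, I) and (A₂, B₂, Q, I), let Ψᵢ = BᵢᵀPᵢBᵢ + I, and let τ₁ = max(‖B₁‖, 1). If δ := ‖[A₁ − A₂, B₁ − B₂]‖_F ≤ (1/16)·‖P₁‖^{−2}, then ‖Ψ₂ − Ψ₁‖ ≤ 15·τ₁²·‖P₁‖³·δ. -/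
open Matrix
open scoped Kronecker

set_option linter.unusedSectionVars false
set_option maxHeartbeats 4000000

namespace Psi
variable {ι κ : Type*} [Fintype ι] [Fintype κ] [DecidableEq ι] [DecidableEq κ]

noncomputable def E {ι : Type*} (x : ι → ℝ) : EuclideanSpace ℝ ι := (WithLp.equiv 2 _).symm x

lemma normE_sq (x : ι → ℝ) : ‖E x‖ ^ 2 = x ⬝ᵥ x := by
  rw [EuclideanSpace.norm_eq, Real.sq_sqrt (by positivity)]
  simp [E, dotProduct, sq]

lemma dot_eq_inner (x y : ι → ℝ) : x ⬝ᵥ y = inner ℝ (E x) (E y) := by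
  simp [E, PiLp.inner_apply, dotProduct, mul_comm, RCLike.inner_apply]

lemma abs_dot_le (x y : ι → ℝ) : |x ⬝ᵥ y| ≤ ‖E x‖ * ‖E y‖ := by
  rw [dot_eq_inner]; exact abs_real_inner_le_norm _ _

lemma normE_nonneg (x : ι → ℝ) : 0 ≤ ‖E x‖ := norm_nonneg _

lemma E_add (x y : ι → ℝ) : E (x + y) = E x + E y := rfl

lemma normE_add_le (x y : ι → ℝ) : ‖E (x + y)‖ ≤ ‖E x‖ + ‖E y‖ := by
  rw [E_add]; exact norm_add_le _ _

lemma spNorm_nonneg (A : Matrix ι κ ℝ) : 0 ≤ spNorm A := norm_nonneg _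

lemma norm_mulVec_le (A : Matrix ι κ ℝ) (x : κ → ℝ) :
    ‖E (A *ᵥ x)‖ ≤ spNorm A * ‖E x‖ := by
  have := (Matrix.toEuclideanLin A).toContinuousLinearMap.le_opNorm (E x)
  simpa [spNorm, E] using this

lemma spNorm_le_bound (A : Matrix ι κ ℝ) (c : ℝ) (hc : 0 ≤ c)
    (h : ∀ x, ‖E (A *ᵥ x)‖ ≤ c * ‖E x‖) : spNorm A ≤ c := by
  apply ContinuousLinearMap.opNorm_le_bound _ hc
  intro v
  have := h ((WithLp.equiv 2 _) v)
  exact this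

lemma frobNorm_nonneg (A : Matrix ι κ ℝ) : 0 ≤ frobNorm A := Real.sqrt_nonneg _

lemma frobNorm_sq (A : Matrix ι κ ℝ) : frobNorm A ^ 2 = ∑ i, ∑ j, (A i j) ^ 2 := by
  rw [frobNorm, Real.sq_sqrt]
  positivity

lemma spNorm_le_frobNorm (A : Matrix ι κ ℝ) : spNorm A ≤ frobNorm A := by
  apply spNorm_le_bound _ _ (frobNorm_nonneg A)
  intro x
  have h1 : ‖E (A *ᵥ x)‖ ^ 2 ≤ (frobNorm A * ‖E x‖) ^ 2 := by
    rw [normE_sq, mul_pow, frobNorm_sq, normE_sq]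
    have : (A *ᵥ x) ⬝ᵥ (A *ᵥ x) = ∑ i, (∑ j, A i j * x j) ^ 2 := by
      simp [dotProduct, mulVec, sq]
    rw [this, Finset.sum_mul]
    apply Finset.sum_le_sum
    intro i _
    have := Finset.sum_mul_sq_le_sq_mul_sq Finset.univ (fun j => A i j) (fun j => x j)
    calc (∑ j, A i j * x j) ^ 2 ≤ (∑ j, A i j ^ 2) * ∑ j, x j ^ 2 := this
      _ = (∑ j, A i j ^ 2) * (x ⬝ᵥ x) := by simp [dotProduct, sq]
  have h2 : 0 ≤ frobNorm A * ‖E x‖ := mul_nonneg (frobNorm_nonneg A) (normE_nonneg x)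
  nlinarith [normE_nonneg (A *ᵥ x)]

lemma frob_left_le {κ' : Type*} [Fintype κ'] (X : Matrix ι κ ℝ) (Y : Matrix ι κ' ℝ) :
    frobNorm X ≤ frobNorm (Matrix.fromCols X Y) := by
  apply Real.sqrt_le_sqrt
  apply Finset.sum_le_sum
  intro i _
  rw [Fintype.sum_sum_type]
  simp only [fromCols_apply_inl, fromCols_apply_inr]
  have : 0 ≤ ∑ j, Y i j ^ 2 := by positivity
  linarith

lemma frob_right_le {κ' : Type*} [Fintype κ'] (X : Matrix ι κ ℝ) (Y : Matrix ι κ' ℝ) :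
    frobNorm Y ≤ frobNorm (Matrix.fromCols X Y) := by
  apply Real.sqrt_le_sqrt
  apply Finset.sum_le_sum
  intro i _
  rw [Fintype.sum_sum_type]
  simp only [fromCols_apply_inl, fromCols_apply_inr]
  have : 0 ≤ ∑ j, X i j ^ 2 := by positivity
  linarith

lemma sym_dot (A : Matrix ι ι ℝ) (hA : Aᵀ = A) (x y : ι → ℝ) :
    x ⬝ᵥ A *ᵥ y = y ⬝ᵥ A *ᵥ x := by
  conv_lhs => rw [← hA]
  rw [Matrix.dotProduct_mulVec, Matrix.vecMul_transpose, dotProduct_comm]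

lemma conj_qf (L : Matrix ι κ ℝ) (M : Matrix ι ι ℝ) (x : κ → ℝ) :
    x ⬝ᵥ (Lᵀ * M * L) *ᵥ x = (L *ᵥ x) ⬝ᵥ M *ᵥ (L *ᵥ x) := by
  rw [← Matrix.mulVec_mulVec, ← Matrix.mulVec_mulVec, Matrix.dotProduct_mulVec,
    Matrix.vecMul_transpose]

lemma polar_qf (A : Matrix ι ι ℝ) (hA : Aᵀ = A) (a b : ι → ℝ) :
    a ⬝ᵥ A *ᵥ a - b ⬝ᵥ A *ᵥ b = (a + b) ⬝ᵥ A *ᵥ (a - b) := by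
  have h := sym_dot A hA a b
  simp only [add_dotProduct, Matrix.mulVec_sub, dotProduct_sub]
  ring_nf
  rw [h]
  ring

lemma E_smul (s : ℝ) (x : ι → ℝ) : E (s • x) = s • E x := rfl

lemma normE_smul (s : ℝ) (x : ι → ℝ) : ‖E (s • x)‖ = |s| * ‖E x‖ := by
  rw [E_smul, norm_smul, Real.norm_eq_abs]

lemma dot_tt (K : Matrix κ ι ℝ) (y : ι → ℝ) : y ⬝ᵥ (Kᵀ * K) *ᵥ y = ‖E (K *ᵥ y)‖ ^ 2 := by
  rw [normE_sq, ← Matrix.mulVec_mulVec, Matrix.dotProduct_mulVec, Matrix.vecMul_transpose]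

lemma psd_qf {M : Matrix ι ι ℝ} (h : M.PosSemidef) (x : ι → ℝ) : 0 ≤ x ⬝ᵥ M *ᵥ x := by
  simpa using h.dotProduct_mulVec_nonneg x

lemma qf_le_spNorm (M : Matrix ι ι ℝ) (x : ι → ℝ) :
    x ⬝ᵥ M *ᵥ x ≤ spNorm M * ‖E x‖ ^ 2 := by
  calc x ⬝ᵥ M *ᵥ x ≤ |x ⬝ᵥ M *ᵥ x| := le_abs_self _
    _ ≤ ‖E x‖ * ‖E (M *ᵥ x)‖ := abs_dot_le _ _
    _ ≤ ‖E x‖ * (spNorm M * ‖E x‖) :=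
        mul_le_mul_of_nonneg_left (norm_mulVec_le M x) (normE_nonneg x)
    _ = spNorm M * ‖E x‖ ^ 2 := by ring

lemma le_of_sq_le_sq {a b : ℝ} (ha : 0 ≤ a) (hb : 0 ≤ b) (h : a ^ 2 ≤ b ^ 2) : a ≤ b := by
  nlinarith

/-- Bilinear bound from a quadratic-form bound, for symmetric matrices. -/
lemma bilin_le_of_qf (A : Matrix ι ι ℝ) (hA : Aᵀ = A) (c : ℝ)
    (h : ∀ x, |x ⬝ᵥ A *ᵥ x| ≤ c * ‖E x‖ ^ 2) (x y : ι → ℝ) :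
    |x ⬝ᵥ A *ᵥ y| ≤ c * (‖E x‖ * ‖E y‖) := by
  have key : ∀ u v : ι → ℝ, |u ⬝ᵥ A *ᵥ v| ≤ c / 2 * (‖E u‖ ^ 2 + ‖E v‖ ^ 2) := by
    intro u v
    have h4 : (u + v) ⬝ᵥ A *ᵥ (u + v) - (u - v) ⬝ᵥ A *ᵥ (u - v) = 4 * (u ⬝ᵥ A *ᵥ v) := by
      have hs := sym_dot A hA u v
      simp only [add_dotProduct, sub_dotProduct, Matrix.mulVec_add,
        Matrix.mulVec_sub, dotProduct_add, dotProduct_sub]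
      rw [hs]; ring
    have h1 := h (u + v)
    have h2 := h (u - v)
    have hpar : ‖E (u+v)‖ ^ 2 + ‖E (u-v)‖ ^ 2 = 2 * (‖E u‖^2 + ‖E v‖^2) := by
      rw [normE_sq, normE_sq, normE_sq, normE_sq]
      simp only [add_dotProduct, sub_dotProduct, dotProduct_add,
        dotProduct_sub]
      ring
    have habs : |4 * (u ⬝ᵥ A *ᵥ v)| ≤
        |(u+v) ⬝ᵥ A *ᵥ (u+v)| + |(u-v) ⬝ᵥ A *ᵥ (u-v)| := by
      rw [← h4]; exact abs_sub _ _
    rw [abs_mul] at habs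
    have h44 : |(4:ℝ)| = 4 := by norm_num
    rw [h44] at habs
    have h5 : c * ‖E (u+v)‖^2 + c * ‖E (u-v)‖^2 = 2 * c * (‖E u‖^2 + ‖E v‖^2) := by
      rw [← mul_add, hpar]; ring
    linarith
  have ha' : (0:ℝ) ≤ ‖E x‖ := normE_nonneg x
  have hb' : (0:ℝ) ≤ ‖E y‖ := normE_nonneg y
  set a := ‖E x‖ with ha
  set b := ‖E y‖ with hb
  have hls : (b • x) ⬝ᵥ A *ᵥ (a • y) = b * a * (x ⬝ᵥ A *ᵥ y) := by
    rw [Matrix.mulVec_smul, smul_dotProduct, dotProduct_smul]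
    simp [smul_eq_mul]; ring
  have h0 := key (b • x) (a • y)
  rw [hls, normE_smul, normE_smul, abs_mul,
    abs_of_nonneg (mul_nonneg hb' ha'), abs_of_nonneg hb', abs_of_nonneg ha'] at h0
  rw [← ha, ← hb] at h0
  rcases eq_or_lt_of_le ha' with hx0 | hx0
  · have hxz : x = 0 := by
      have hx : E x = 0 := norm_eq_zero.mp hx0.symm
      have := congrArg (WithLp.equiv 2 (ι → ℝ)) hx
      simpa [E] using this
    have hz : x ⬝ᵥ A *ᵥ y = 0 := by simp [hxz]
    rw [hz, abs_zero, ← hx0]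
    simp
  rcases eq_or_lt_of_le hb' with hy0 | hy0
  · have hyz : y = 0 := by
      have hy : E y = 0 := norm_eq_zero.mp hy0.symm
      have := congrArg (WithLp.equiv 2 (ι → ℝ)) hy
      simpa [E] using this
    have hz : x ⬝ᵥ A *ᵥ y = 0 := by simp [hyz]
    rw [hz, abs_zero, ← hy0]
    simp
  have hab : (0:ℝ) < a * b := mul_pos hx0 hy0
  have := le_of_mul_le_mul_left
    (by nlinarith : (a*b) * |x ⬝ᵥ A *ᵥ y| ≤ (a*b) * (c*(a*b))) hab
  nlinarith

/-- spectral norm bound from quadratic-form bound, for symmetric matrices. -/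
lemma spNorm_le_of_qf (A : Matrix ι ι ℝ) (hA : Aᵀ = A) (c : ℝ) (hc : 0 ≤ c)
    (h : ∀ x, |x ⬝ᵥ A *ᵥ x| ≤ c * ‖E x‖ ^ 2) : spNorm A ≤ c := by
  apply spNorm_le_bound _ _ hc
  intro x
  rcases eq_or_lt_of_le (normE_nonneg (A *ᵥ x)) with h0 | h0
  · rw [← h0]; positivity
  have hb := bilin_le_of_qf A hA c h (A *ᵥ x) x
  have : ‖E (A *ᵥ x)‖ ^ 2 = (A *ᵥ x) ⬝ᵥ A *ᵥ x := normE_sq _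
  have h1 : ‖E (A *ᵥ x)‖ ^ 2 ≤ c * (‖E (A *ᵥ x)‖ * ‖E x‖) := by
    rw [this]
    exact le_trans (le_abs_self _) hb
  have := (mul_le_mul_iff_right₀ h0).mp
    (by nlinarith : ‖E (A *ᵥ x)‖ * ‖E (A *ᵥ x)‖ ≤ ‖E (A *ᵥ x)‖ * (c * ‖E x‖))
  linarith

/-- completed-square form of the DARE -/
lemma dare_key (P Q A : Matrix ι ι ℝ) (B : Matrix ι κ ℝ) (K Kst : Matrix κ ι ℝ)
    (Ψ : Matrix κ κ ℝ)
    (hP : Pᵀ = P) (hΨ : Ψ = Bᵀ * P * B + 1)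
    (hΨK : Ψ * Kst = -(Bᵀ * P * A)) :
    (A + B * K)ᵀ * P * (A + B * K) + (Kᵀ * K + Q)
      = (Aᵀ * P * A + Aᵀ * P * B * Kst + Q) + (K - Kst)ᵀ * Ψ * (K - Kst) := by
  have hΨsym : Ψᵀ = Ψ := by
    rw [hΨ]
    simp [Matrix.transpose_add, Matrix.transpose_mul, Matrix.mul_assoc, hP]
  have hKstΨ : Kstᵀ * Ψ = -(Aᵀ * P * B) := by
    have h := congrArg Matrix.transpose hΨK
    simp only [Matrix.transpose_mul, Matrix.transpose_neg, hΨsym] at h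
    rw [h]
    simp [Matrix.transpose_mul, hP, Matrix.mul_assoc]
  have e1 : (K - Kst)ᵀ * Ψ * (K - Kst)
      = Kᵀ * Ψ * K - Kᵀ * (Ψ * Kst) - (Kstᵀ * Ψ) * K + (Kstᵀ * Ψ) * Kst := by
    simp only [Matrix.transpose_sub, Matrix.sub_mul, Matrix.mul_sub, Matrix.mul_assoc]
    abel
  rw [e1, hΨK, hKstΨ, hΨ]
  simp only [Matrix.transpose_add, Matrix.transpose_mul, Matrix.add_mul, Matrix.mul_add,
    Matrix.mul_assoc, neg_one_smul, Matrix.mul_neg, Matrix.neg_mul, neg_neg, Matrix.one_mul,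
    Matrix.mul_one]
  abel

/-- All the facts we need about one DARE system. -/
lemma system_facts (P Q A : Matrix ι ι ℝ) (B : Matrix ι κ ℝ)
    (hP : P.PosSemidef)
    (hdare : P = Aᵀ * P * A - Aᵀ * P * B * (Bᵀ * P * B + 1)⁻¹ * (Bᵀ * P * A) + Q) :
    ∃ K : Matrix κ ι ℝ,
      (∀ y, y ⬝ᵥ P *ᵥ y = ((A + B * K) *ᵥ y) ⬝ᵥ P *ᵥ ((A + B * K) *ᵥ y)
          + ‖E (K *ᵥ y)‖ ^ 2 + y ⬝ᵥ Q *ᵥ y)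
      ∧ (∀ (K' : Matrix κ ι ℝ) y, y ⬝ᵥ P *ᵥ y ≤ ((A + B * K') *ᵥ y) ⬝ᵥ P *ᵥ ((A + B * K') *ᵥ y)
          + ‖E (K' *ᵥ y)‖ ^ 2 + y ⬝ᵥ Q *ᵥ y) := by
  have hPt : Pᵀ = P := by
    rw [← Matrix.conjTranspose_eq_transpose_of_trivial]; exact hP.1
  set Ψm : Matrix κ κ ℝ := Bᵀ * P * B + 1 with hΨm
  have hpsd : (Bᵀ * P * B).PosSemidef := by
    have := hP.conjTranspose_mul_mul_same B
    rwa [Matrix.conjTranspose_eq_transpose_of_trivial] at this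
  have hpd : Ψm.PosDef := Matrix.PosDef.posSemidef_add hpsd Matrix.PosDef.one
  have hdet : IsUnit Ψm.det := isUnit_iff_ne_zero.mpr (ne_of_gt hpd.det_pos)
  have hinv : Ψm * Ψm⁻¹ = 1 := Matrix.mul_nonsing_inv _ hdet
  set Kst : Matrix κ ι ℝ := -(Ψm⁻¹ * (Bᵀ * P * A)) with hKst
  have hΨK : Ψm * Kst = -(Bᵀ * P * A) := by
    rw [hKst, Matrix.mul_neg, ← Matrix.mul_assoc, hinv, Matrix.one_mul]
  have hdareK : P = Aᵀ * P * A + Aᵀ * P * B * Kst + Q := by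
    rw [hKst]
    calc P = Aᵀ * P * A - Aᵀ * P * B * Ψm⁻¹ * (Bᵀ * P * A) + Q := hdare
      _ = Aᵀ * P * A + Aᵀ * P * B * -(Ψm⁻¹ * (Bᵀ * P * A)) + Q := by
          rw [Matrix.mul_neg, sub_eq_add_neg, Matrix.mul_assoc (Aᵀ * P * B)]
  have hkey : ∀ K' : Matrix κ ι ℝ,
      (A + B * K')ᵀ * P * (A + B * K') + (K'ᵀ * K' + Q)
        = P + (K' - Kst)ᵀ * Ψm * (K' - Kst) := by
    intro K'
    rw [dare_key P Q A B K' Kst Ψm hPt hΨm hΨK, ← hdareK]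
  refine ⟨Kst, ?_, ?_⟩
  · intro y
    have h := hkey Kst
    simp only [sub_self, Matrix.transpose_zero, Matrix.zero_mul, Matrix.mul_zero,
      add_zero] at h
    have := congrArg (fun M => y ⬝ᵥ M *ᵥ y) h.symm
    simp only [Matrix.add_mulVec, dotProduct_add] at this
    rw [this, conj_qf, dot_tt]
    ring
  · intro K' y
    have h := hkey K'
    have := congrArg (fun M => y ⬝ᵥ M *ᵥ y) h
    simp only [Matrix.add_mulVec, dotProduct_add] at this
    rw [conj_qf, dot_tt] at this
    have hpos : 0 ≤ y ⬝ᵥ ((K' - Kst)ᵀ * Ψm * (K' - Kst)) *ᵥ y := by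
      rw [conj_qf]
      exact psd_qf hpd.posSemidef _
    linarith [this.le, this.ge]

/-- Lyapunov comparison / geometric series bound. -/
lemma series_bound (P D N : Matrix ι ι ℝ) (cΔ C0 LP σ : ℝ)
    (hσ0 : 0 < σ) (hσ1 : σ ≤ 1) (hLP : 1 ≤ LP)
    (hPle : ∀ y : ι → ℝ, y ⬝ᵥ P *ᵥ y ≤ LP * ‖E y‖ ^ 2)
    (hPge : ∀ y : ι → ℝ, ‖E y‖ ^ 2 ≤ y ⬝ᵥ P *ᵥ y)
    (hLyap : ∀ y : ι → ℝ, (N *ᵥ y) ⬝ᵥ P *ᵥ (N *ᵥ y) ≤ y ⬝ᵥ P *ᵥ y - σ * ‖E y‖ ^ 2)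
    (hstep : ∀ y : ι → ℝ, y ⬝ᵥ D *ᵥ y ≤ (N *ᵥ y) ⬝ᵥ D *ᵥ (N *ᵥ y) + cΔ * ‖E y‖ ^ 2)
    (hC0 : ∀ y : ι → ℝ, y ⬝ᵥ D *ᵥ y ≤ C0 * ‖E y‖ ^ 2)
    (hcΔ : 0 ≤ cΔ) (hC0' : 0 ≤ C0) :
    ∀ x : ι → ℝ, x ⬝ᵥ D *ᵥ x ≤ cΔ / σ * LP * ‖E x‖ ^ 2 := by
  intro x
  set xs : ℕ → (ι → ℝ) := fun k => (N ^ k) *ᵥ x with hxs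
  have hxs0 : xs 0 = x := by simp [hxs]
  have hxsS : ∀ k, xs (k + 1) = N *ᵥ xs k := by
    intro k
    simp only [hxs, pow_succ']
    rw [← Matrix.mulVec_mulVec]
  have hq0 : ∀ k, 0 ≤ xs k ⬝ᵥ P *ᵥ xs k := fun k =>
    le_trans (by positivity) (hPge (xs k))
  set r : ℝ := 1 - σ / LP with hr
  have hr0 : 0 ≤ r := by
    have h1 : σ / LP ≤ 1 := by
      rw [div_le_one (by linarith : (0:ℝ) < LP)]
      linarith
    simp only [hr]
    linarith
  have hr1 : r < 1 := by
    have : 0 < σ / LP := div_pos hσ0 (by linarith)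
    simp [hr]; linarith
  have hdecay : ∀ k, xs (k+1) ⬝ᵥ P *ᵥ xs (k+1) ≤ r * (xs k ⬝ᵥ P *ᵥ xs k) := by
    intro k
    rw [hxsS k]
    have h1 := hLyap (xs k)
    have h2 : σ * ‖E (xs k)‖ ^ 2 ≥ σ / LP * (xs k ⬝ᵥ P *ᵥ xs k) := by
      have := hPle (xs k)
      have hLP0 : (0:ℝ) < LP := by linarith
      rw [ge_iff_le, div_mul_eq_mul_div, div_le_iff₀ hLP0]
      calc σ * (xs k ⬝ᵥ P *ᵥ xs k) ≤ σ * (LP * ‖E (xs k)‖ ^ 2) := by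
            exact mul_le_mul_of_nonneg_left this (le_of_lt hσ0)
        _ = σ * ‖E (xs k)‖ ^ 2 * LP := by ring
    calc (N *ᵥ xs k) ⬝ᵥ P *ᵥ (N *ᵥ xs k) ≤ xs k ⬝ᵥ P *ᵥ xs k - σ * ‖E (xs k)‖ ^ 2 := h1
      _ ≤ xs k ⬝ᵥ P *ᵥ xs k - σ / LP * (xs k ⬝ᵥ P *ᵥ xs k) := by linarith
      _ = r * (xs k ⬝ᵥ P *ᵥ xs k) := by rw [hr]; ring
  have hdecayK : ∀ k, xs k ⬝ᵥ P *ᵥ xs k ≤ r ^ k * (x ⬝ᵥ P *ᵥ x) := by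
    intro k
    induction k with
    | zero => simp [hxs0]
    | succ k ih =>
      calc xs (k+1) ⬝ᵥ P *ᵥ xs (k+1) ≤ r * (xs k ⬝ᵥ P *ᵥ xs k) := hdecay k
        _ ≤ r * (r ^ k * (x ⬝ᵥ P *ᵥ x)) := by
            exact mul_le_mul_of_nonneg_left ih hr0
        _ = r ^ (k+1) * (x ⬝ᵥ P *ᵥ x) := by ring
  have htel : ∀ K, σ * ∑ k ∈ Finset.range K, ‖E (xs k)‖ ^ 2
      ≤ x ⬝ᵥ P *ᵥ x - xs K ⬝ᵥ P *ᵥ xs K := by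
    intro K
    induction K with
    | zero => simp [hxs0]
    | succ K ih =>
      rw [Finset.sum_range_succ, mul_add]
      have h1 := hLyap (xs K)
      rw [← hxsS K] at h1
      linarith
  have hiter : ∀ K, x ⬝ᵥ D *ᵥ x ≤ xs K ⬝ᵥ D *ᵥ xs K
      + cΔ * ∑ k ∈ Finset.range K, ‖E (xs k)‖ ^ 2 := by
    intro K
    induction K with
    | zero => simp [hxs0]
    | succ K ih =>
      rw [Finset.sum_range_succ, mul_add]
      have h1 := hstep (xs K)
      rw [← hxsS K] at h1
      linarith
  have hK : ∀ K : ℕ, x ⬝ᵥ D *ᵥ x ≤ C0 * (x ⬝ᵥ P *ᵥ x) * r ^ K + cΔ / σ * (x ⬝ᵥ P *ᵥ x) := by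
    intro K
    have h1 := hiter K
    have h2 : xs K ⬝ᵥ D *ᵥ xs K ≤ C0 * (x ⬝ᵥ P *ᵥ x) * r ^ K := by
      calc xs K ⬝ᵥ D *ᵥ xs K ≤ C0 * ‖E (xs K)‖ ^ 2 := hC0 (xs K)
        _ ≤ C0 * (xs K ⬝ᵥ P *ᵥ xs K) := mul_le_mul_of_nonneg_left (hPge _) hC0'
        _ ≤ C0 * (r ^ K * (x ⬝ᵥ P *ᵥ x)) := mul_le_mul_of_nonneg_left (hdecayK K) hC0'
        _ = C0 * (x ⬝ᵥ P *ᵥ x) * r ^ K := by ring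
    have h3 : cΔ * ∑ k ∈ Finset.range K, ‖E (xs k)‖ ^ 2 ≤ cΔ / σ * (x ⬝ᵥ P *ᵥ x) := by
      have htelK := htel K
      have : ∑ k ∈ Finset.range K, ‖E (xs k)‖ ^ 2 ≤ (x ⬝ᵥ P *ᵥ x) / σ := by
        rw [le_div_iff₀ hσ0]
        have := hq0 K
        calc (∑ k ∈ Finset.range K, ‖E (xs k)‖ ^ 2) * σ
            = σ * ∑ k ∈ Finset.range K, ‖E (xs k)‖ ^ 2 := by ring
          _ ≤ x ⬝ᵥ P *ᵥ x - xs K ⬝ᵥ P *ᵥ xs K := htelK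
          _ ≤ x ⬝ᵥ P *ᵥ x := by linarith
      calc cΔ * ∑ k ∈ Finset.range K, ‖E (xs k)‖ ^ 2 ≤ cΔ * ((x ⬝ᵥ P *ᵥ x) / σ) :=
            mul_le_mul_of_nonneg_left this hcΔ
        _ = cΔ / σ * (x ⬝ᵥ P *ᵥ x) := by ring
    linarith
  have hlim : Filter.Tendsto (fun K : ℕ => C0 * (x ⬝ᵥ P *ᵥ x) * r ^ K + cΔ / σ * (x ⬝ᵥ P *ᵥ x))
      Filter.atTop (nhds (cΔ / σ * (x ⬝ᵥ P *ᵥ x))) := by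
    have h0 : Filter.Tendsto (fun K : ℕ => r ^ K) Filter.atTop (nhds 0) :=
      tendsto_pow_atTop_nhds_zero_of_lt_one hr0 hr1
    have := (h0.const_mul (C0 * (x ⬝ᵥ P *ᵥ x))).add_const (cΔ / σ * (x ⬝ᵥ P *ᵥ x))
    simpa using this
  have hfin : x ⬝ᵥ D *ᵥ x ≤ cΔ / σ * (x ⬝ᵥ P *ᵥ x) :=
    ge_of_tendsto hlim (Filter.Eventually.of_forall hK)
  calc x ⬝ᵥ D *ᵥ x ≤ cΔ / σ * (x ⬝ᵥ P *ᵥ x) := hfin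
    _ ≤ cΔ / σ * (LP * ‖E x‖ ^ 2) :=
        mul_le_mul_of_nonneg_left (hPle x) (by positivity)
    _ = cΔ / σ * LP * ‖E x‖ ^ 2 := by ring

end Psi
open Psi in
/-- Perturbation bound on Ψ = BᵀPB + I between two nearby systems. -/
theorem psi_perturbation {n m : ℕ}
    (A₁ A₂ : Matrix (Fin n) (Fin n) ℝ) (B₁ B₂ : Matrix (Fin n) (Fin m) ℝ)
    (Q P₁ P₂ : Matrix (Fin n) (Fin n) ℝ)
    (Ψ₁ Ψ₂ : Matrix (Fin m) (Fin m) ℝ) (τ₁ δ : ℝ)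
    (hQsym : Q.IsHermitian) (hQ : (Q - 1).PosSemidef)
    (hP₁ : P₁.PosSemidef)
    (hdare₁ : P₁ = A₁ᵀ * P₁ * A₁ - A₁ᵀ * P₁ * B₁ * (B₁ᵀ * P₁ * B₁ + 1)⁻¹ * (B₁ᵀ * P₁ * A₁) + Q)
    (hP₂ : P₂.PosSemidef)
    (hdare₂ : P₂ = A₂ᵀ * P₂ * A₂ - A₂ᵀ * P₂ * B₂ * (B₂ᵀ * P₂ * B₂ + 1)⁻¹ * (B₂ᵀ * P₂ * A₂) + Q)
    (hΨ₁ : Ψ₁ = B₁ᵀ * P₁ * B₁ + 1) (hΨ₂ : Ψ₂ = B₂ᵀ * P₂ * B₂ + 1)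
    (hτ : τ₁ = max (spNorm B₁) 1)
    (hδdef : δ = frobNorm (Matrix.fromCols (A₁ - A₂) (B₁ - B₂)))
    (hδ : δ ≤ (1 / 16) * spNorm P₁ ^ (-(2 : ℝ))) :
    spNorm (Ψ₂ - Ψ₁) ≤ 15 * τ₁ ^ 2 * spNorm P₁ ^ 3 * δ := by
  have hδ0 : 0 ≤ δ := by rw [hδdef]; exact frobNorm_nonneg _
  have hτ1 : 1 ≤ τ₁ := by rw [hτ]; exact le_max_right _ _
  have hτB : spNorm B₁ ≤ τ₁ := by rw [hτ]; exact le_max_left _ _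
  have hL0 : 0 ≤ spNorm P₁ := spNorm_nonneg _
  rcases Nat.eq_zero_or_pos n with hn | hn
  · -- degenerate case: no states
    subst hn
    have h1 : B₁ᵀ * P₁ * B₁ = 0 := by
      ext i j; simp [Matrix.mul_apply]
    have h2 : B₂ᵀ * P₂ * B₂ = 0 := by
      ext i j; simp [Matrix.mul_apply]
    have hzero : Ψ₂ - Ψ₁ = 0 := by rw [hΨ₁, hΨ₂, h1, h2]; simp
    have hsp0 : spNorm (Ψ₂ - Ψ₁) = 0 := by
      rw [hzero]
      apply le_antisymm
      · apply spNorm_le_bound _ 0 le_rfl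
        intro x
        rw [Matrix.zero_mulVec]
        have hE : E (0 : Fin m → ℝ) = 0 := rfl
        rw [hE, norm_zero, zero_mul]
      · exact spNorm_nonneg _
    rw [hsp0]
    have : (0:ℝ) ≤ τ₁ := by linarith
    positivity
  -- main case
  set L := spNorm P₁ with hLdef
  -- basic quadratic form facts
  have hP₁t : P₁ᵀ = P₁ := by
    rw [← Matrix.conjTranspose_eq_transpose_of_trivial]; exact hP₁.1
  have hP₂t : P₂ᵀ = P₂ := by
    rw [← Matrix.conjTranspose_eq_transpose_of_trivial]; exact hP₂.1
  have hP₁0 : ∀ y, 0 ≤ y ⬝ᵥ P₁ *ᵥ y := fun y => psd_qf hP₁ y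
  have hP₂0 : ∀ y, 0 ≤ y ⬝ᵥ P₂ *ᵥ y := fun y => psd_qf hP₂ y
  have hQI : ∀ y : Fin n → ℝ, ‖E y‖ ^ 2 ≤ y ⬝ᵥ Q *ᵥ y := by
    intro y
    have h := psd_qf hQ y
    rw [Matrix.sub_mulVec, dotProduct_sub, Matrix.one_mulVec] at h
    rw [normE_sq]
    linarith
  have hQ0 : ∀ y : Fin n → ℝ, 0 ≤ y ⬝ᵥ Q *ᵥ y := fun y =>
    le_trans (by positivity) (hQI y)
  obtain ⟨K1, heq1, hle1⟩ := system_facts P₁ Q A₁ B₁ hP₁ hdare₁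
  obtain ⟨K2, heq2, hle2⟩ := system_facts P₂ Q A₂ B₂ hP₂ hdare₂
  -- P ⪰ I for both
  have hP₁I : ∀ y : Fin n → ℝ, ‖E y‖ ^ 2 ≤ y ⬝ᵥ P₁ *ᵥ y := by
    intro y
    have h := heq1 y
    have h1 := hP₁0 ((A₁ + B₁ * K1) *ᵥ y)
    have h2 := hQI y
    nlinarith [sq_nonneg ‖E (K1 *ᵥ y)‖]
  have hP₂I : ∀ y : Fin n → ℝ, ‖E y‖ ^ 2 ≤ y ⬝ᵥ P₂ *ᵥ y := by
    intro y
    have h := heq2 y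
    have h1 := hP₂0 ((A₂ + B₂ * K2) *ᵥ y)
    have h2 := hQI y
    nlinarith [sq_nonneg ‖E (K2 *ᵥ y)‖]
  have hP₁le : ∀ y : Fin n → ℝ, y ⬝ᵥ P₁ *ᵥ y ≤ L * ‖E y‖ ^ 2 := fun y => qf_le_spNorm P₁ y
  -- L ≥ 1
  have hL1 : 1 ≤ L := by
    set e : Fin n → ℝ := Pi.single (⟨0, hn⟩ : Fin n) 1 with he
    have he1 : ‖E e‖ ^ 2 = 1 := by
      rw [normE_sq, he]
      simp [dotProduct, Pi.single_apply]
    have := hP₁I e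
    have := hP₁le e
    nlinarith
  have hL0' : (0:ℝ) < L := by linarith
  -- δ facts
  have hδL : δ * L ^ 2 ≤ 1 / 16 := by
    have hrw : L ^ (-(2:ℝ)) = (L ^ 2)⁻¹ := by
      rw [show (-(2:ℝ)) = -((2:ℕ):ℝ) by norm_num,
        Real.rpow_neg (le_of_lt hL0'), Real.rpow_natCast]
    rw [hrw] at hδ
    have hL2 : (0:ℝ) < L ^ 2 := by positivity
    have := mul_le_mul_of_nonneg_right hδ (le_of_lt hL2)
    have heq : 1 / 16 * (L ^ 2)⁻¹ * L ^ 2 = 1 / 16 := by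
      field_simp
    linarith [heq ▸ this]
  have hδ16 : δ ≤ 1 / 16 := by
    have h1 : (1:ℝ) ≤ L ^ 2 := by nlinarith
    have h2 : δ * 1 ≤ δ * L ^ 2 := mul_le_mul_of_nonneg_left h1 hδ0
    linarith
  set s : ℝ := Real.sqrt L with hsdef
  have hs0 : 0 ≤ s := Real.sqrt_nonneg _
  have hs2 : s ^ 2 = L := Real.sq_sqrt (le_of_lt hL0')
  have hs1 : 1 ≤ s := by
    rw [hsdef, ← Real.sqrt_one]
    exact Real.sqrt_le_sqrt hL1
  -- difference norms
  have hdA : ∀ y : Fin n → ℝ, ‖E ((A₁ - A₂) *ᵥ y)‖ ≤ δ * ‖E y‖ := by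
    intro y
    have h1 : spNorm (A₁ - A₂) ≤ δ := by
      rw [hδdef]
      exact le_trans (spNorm_le_frobNorm _) (frob_left_le _ _)
    exact le_trans (norm_mulVec_le _ y) (mul_le_mul_of_nonneg_right h1 (normE_nonneg y))
  have hdB : ∀ y : Fin m → ℝ, ‖E ((B₁ - B₂) *ᵥ y)‖ ≤ δ * ‖E y‖ := by
    intro y
    have h1 : spNorm (B₁ - B₂) ≤ δ := by
      rw [hδdef]
      exact le_trans (spNorm_le_frobNorm _) (frob_right_le _ _)
    exact le_trans (norm_mulVec_le _ y) (mul_le_mul_of_nonneg_right h1 (normE_nonneg y))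
  have hdA' : ∀ y : Fin n → ℝ, ‖E ((A₂ - A₁) *ᵥ y)‖ ≤ δ * ‖E y‖ := by
    intro y
    have : (A₂ - A₁) *ᵥ y = -((A₁ - A₂) *ᵥ y) := by
      rw [← Matrix.neg_mulVec, neg_sub]
    rw [this]
    have hEneg : ‖E (-((A₁ - A₂) *ᵥ y))‖ = ‖E ((A₁ - A₂) *ᵥ y)‖ := by
      show ‖-(E ((A₁ - A₂) *ᵥ y))‖ = _
      exact norm_neg _
    rw [hEneg]; exact hdA y
  have hdB' : ∀ y : Fin m → ℝ, ‖E ((B₂ - B₁) *ᵥ y)‖ ≤ δ * ‖E y‖ := by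
    intro y
    have : (B₂ - B₁) *ᵥ y = -((B₁ - B₂) *ᵥ y) := by
      rw [← Matrix.neg_mulVec, neg_sub]
    rw [this]
    have hEneg : ‖E (-((B₁ - B₂) *ᵥ y))‖ = ‖E ((B₁ - B₂) *ᵥ y)‖ := by
      show ‖-(E ((B₁ - B₂) *ᵥ y))‖ = _
      exact norm_neg _
    rw [hEneg]; exact hdB y
  -- ============ upper direction ============
  have hK1n : ∀ y : Fin n → ℝ, ‖E (K1 *ᵥ y)‖ ≤ s * ‖E y‖ := by
    intro y
    apply Psi.le_of_sq_le_sq (normE_nonneg _) (mul_nonneg hs0 (normE_nonneg _))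
    have h := heq1 y
    have h1 := hP₁0 ((A₁ + B₁ * K1) *ᵥ y)
    have h2 := hQ0 y
    have h3 := hP₁le y
    calc ‖E (K1 *ᵥ y)‖ ^ 2 ≤ y ⬝ᵥ P₁ *ᵥ y := by linarith
      _ ≤ L * ‖E y‖ ^ 2 := h3
      _ = (s * ‖E y‖) ^ 2 := by rw [mul_pow, hs2]
  have hLyap1 : ∀ y : Fin n → ℝ,
      ((A₁ + B₁ * K1) *ᵥ y) ⬝ᵥ P₁ *ᵥ ((A₁ + B₁ * K1) *ᵥ y) ≤ y ⬝ᵥ P₁ *ᵥ y - ‖E y‖ ^ 2 := by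
    intro y
    have h := heq1 y
    have h2 := hQI y
    nlinarith [sq_nonneg ‖E (K1 *ᵥ y)‖]
  have hL1n : ∀ y : Fin n → ℝ, ‖E ((A₁ + B₁ * K1) *ᵥ y)‖ ≤ s * ‖E y‖ := by
    intro y
    apply Psi.le_of_sq_le_sq (normE_nonneg _) (mul_nonneg hs0 (normE_nonneg _))
    have h1 := hP₁I ((A₁ + B₁ * K1) *ᵥ y)
    have h2 := hLyap1 y
    have h3 := hP₁le y
    have h4 : (0:ℝ) ≤ ‖E y‖ ^ 2 := sq_nonneg _
    calc ‖E ((A₁ + B₁ * K1) *ᵥ y)‖ ^ 2 ≤ y ⬝ᵥ P₁ *ᵥ y := by linarith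
      _ ≤ L * ‖E y‖ ^ 2 := h3
      _ = (s * ‖E y‖) ^ 2 := by rw [mul_pow, hs2]
  have hdiff1 : ∀ y : Fin n → ℝ,
      (A₂ + B₂ * K1) *ᵥ y - (A₁ + B₁ * K1) *ᵥ y
        = (A₂ - A₁) *ᵥ y + (B₂ - B₁) *ᵥ (K1 *ᵥ y) := by
    intro y
    rw [Matrix.add_mulVec, Matrix.add_mulVec, Matrix.sub_mulVec, Matrix.sub_mulVec,
      Matrix.mulVec_mulVec, Matrix.mulVec_mulVec]
    abel
  have he1 : ∀ y : Fin n → ℝ,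
      ‖E ((A₂ + B₂ * K1) *ᵥ y - (A₁ + B₁ * K1) *ᵥ y)‖ ≤ 2 * δ * s * ‖E y‖ := by
    intro y
    rw [hdiff1 y]
    calc ‖E ((A₂ - A₁) *ᵥ y + (B₂ - B₁) *ᵥ (K1 *ᵥ y))‖
        ≤ ‖E ((A₂ - A₁) *ᵥ y)‖ + ‖E ((B₂ - B₁) *ᵥ (K1 *ᵥ y))‖ := normE_add_le _ _
      _ ≤ δ * ‖E y‖ + δ * ‖E (K1 *ᵥ y)‖ := add_le_add (hdA' y) (hdB' (K1 *ᵥ y))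
      _ ≤ δ * ‖E y‖ + δ * (s * ‖E y‖) := by
          have := hK1n y
          nlinarith
      _ ≤ 2 * δ * s * ‖E y‖ := by
          have hkey : 0 ≤ δ * (s - 1) * ‖E y‖ :=
            mul_nonneg (mul_nonneg hδ0 (by linarith)) (normE_nonneg y)
          nlinarith
  have hN1n : ∀ y : Fin n → ℝ, ‖E ((A₂ + B₂ * K1) *ᵥ y)‖ ≤ (9/8) * s * ‖E y‖ := by
    intro y
    have hsplit : (A₂ + B₂ * K1) *ᵥ y
        = (A₁ + B₁ * K1) *ᵥ y + ((A₂ + B₂ * K1) *ᵥ y - (A₁ + B₁ * K1) *ᵥ y) := by abel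
    rw [hsplit]
    calc ‖E ((A₁ + B₁ * K1) *ᵥ y + ((A₂ + B₂ * K1) *ᵥ y - (A₁ + B₁ * K1) *ᵥ y))‖
        ≤ ‖E ((A₁ + B₁ * K1) *ᵥ y)‖ + ‖E ((A₂ + B₂ * K1) *ᵥ y - (A₁ + B₁ * K1) *ᵥ y)‖ :=
          normE_add_le _ _
      _ ≤ s * ‖E y‖ + 2 * δ * s * ‖E y‖ := add_le_add (hL1n y) (he1 y)
      _ ≤ (9/8) * s * ‖E y‖ := by nlinarith [normE_nonneg y, mul_nonneg hs0 (normE_nonneg y)]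
  have hqfΔ1 : ∀ y : Fin n → ℝ,
      ((A₂ + B₂ * K1) *ᵥ y) ⬝ᵥ P₁ *ᵥ ((A₂ + B₂ * K1) *ᵥ y)
        - ((A₁ + B₁ * K1) *ᵥ y) ⬝ᵥ P₁ *ᵥ ((A₁ + B₁ * K1) *ᵥ y)
        ≤ 17/4 * (δ * L ^ 2) * ‖E y‖ ^ 2 := by
    intro y
    rw [polar_qf P₁ hP₁t]
    have h1 := abs_dot_le ((A₂ + B₂ * K1) *ᵥ y + (A₁ + B₁ * K1) *ᵥ y)
      (P₁ *ᵥ ((A₂ + B₂ * K1) *ᵥ y - (A₁ + B₁ * K1) *ᵥ y))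
    have h2 := norm_mulVec_le P₁ ((A₂ + B₂ * K1) *ᵥ y - (A₁ + B₁ * K1) *ᵥ y)
    have h3 := he1 y
    have h4 : ‖E ((A₂ + B₂ * K1) *ᵥ y + (A₁ + B₁ * K1) *ᵥ y)‖ ≤ (17/8) * s * ‖E y‖ := by
      calc ‖E ((A₂ + B₂ * K1) *ᵥ y + (A₁ + B₁ * K1) *ᵥ y)‖
          ≤ ‖E ((A₂ + B₂ * K1) *ᵥ y)‖ + ‖E ((A₁ + B₁ * K1) *ᵥ y)‖ := normE_add_le _ _
        _ ≤ (9/8) * s * ‖E y‖ + s * ‖E y‖ := add_le_add (hN1n y) (hL1n y)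
        _ = (17/8) * s * ‖E y‖ := by ring
    have h5 : ‖E (P₁ *ᵥ ((A₂ + B₂ * K1) *ᵥ y - (A₁ + B₁ * K1) *ᵥ y))‖
        ≤ L * (2 * δ * s * ‖E y‖) := by
      calc ‖E (P₁ *ᵥ ((A₂ + B₂ * K1) *ᵥ y - (A₁ + B₁ * K1) *ᵥ y))‖
          ≤ L * ‖E ((A₂ + B₂ * K1) *ᵥ y - (A₁ + B₁ * K1) *ᵥ y)‖ := h2
        _ ≤ L * (2 * δ * s * ‖E y‖) := mul_le_mul_of_nonneg_left h3 hL0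
    calc ((A₂ + B₂ * K1) *ᵥ y + (A₁ + B₁ * K1) *ᵥ y) ⬝ᵥ
          P₁ *ᵥ ((A₂ + B₂ * K1) *ᵥ y - (A₁ + B₁ * K1) *ᵥ y)
        ≤ |((A₂ + B₂ * K1) *ᵥ y + (A₁ + B₁ * K1) *ᵥ y) ⬝ᵥ
          P₁ *ᵥ ((A₂ + B₂ * K1) *ᵥ y - (A₁ + B₁ * K1) *ᵥ y)| := le_abs_self _
      _ ≤ ‖E ((A₂ + B₂ * K1) *ᵥ y + (A₁ + B₁ * K1) *ᵥ y)‖ *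
          ‖E (P₁ *ᵥ ((A₂ + B₂ * K1) *ᵥ y - (A₁ + B₁ * K1) *ᵥ y))‖ := h1
      _ ≤ ((17/8) * s * ‖E y‖) * (L * (2 * δ * s * ‖E y‖)) := by
          apply mul_le_mul h4 h5 (normE_nonneg _)
          positivity
      _ = 17/4 * (δ * (s^2 * L)) * ‖E y‖ ^ 2 := by ring
      _ = 17/4 * (δ * L ^ 2) * ‖E y‖ ^ 2 := by rw [hs2]; ring
  -- step inequality and series bound, upper direction
  have hsub : ∀ y : Fin n → ℝ, y ⬝ᵥ (P₂ - P₁) *ᵥ y = y ⬝ᵥ P₂ *ᵥ y - y ⬝ᵥ P₁ *ᵥ y := by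
    intro y; rw [Matrix.sub_mulVec, dotProduct_sub]
  have hsub' : ∀ y : Fin n → ℝ, y ⬝ᵥ (P₁ - P₂) *ᵥ y = y ⬝ᵥ P₁ *ᵥ y - y ⬝ᵥ P₂ *ᵥ y := by
    intro y; rw [Matrix.sub_mulVec, dotProduct_sub]
  have hcΔ1 : (0:ℝ) ≤ 17/4*(δ*L^2) :=
    mul_nonneg (by norm_num) (mul_nonneg hδ0 (sq_nonneg L))
  have hLyapN1 : ∀ y : Fin n → ℝ,
      ((A₂ + B₂ * K1) *ᵥ y) ⬝ᵥ P₁ *ᵥ ((A₂ + B₂ * K1) *ᵥ y)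
        ≤ y ⬝ᵥ P₁ *ᵥ y - 1/2 * ‖E y‖ ^ 2 := by
    intro y
    have h1 := hLyap1 y
    have h2 := hqfΔ1 y
    have h3 : 17/4*(δ*L^2) ≤ 1/2 := by linarith
    have h4 : 17/4*(δ*L^2)*‖E y‖^2 ≤ 1/2*‖E y‖^2 :=
      mul_le_mul_of_nonneg_right h3 (sq_nonneg _)
    linarith
  have hstep1 : ∀ y : Fin n → ℝ, y ⬝ᵥ (P₂ - P₁) *ᵥ y
      ≤ ((A₂ + B₂ * K1) *ᵥ y) ⬝ᵥ (P₂ - P₁) *ᵥ ((A₂ + B₂ * K1) *ᵥ y)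
        + 17/4*(δ*L^2) * ‖E y‖ ^ 2 := by
    intro y
    rw [hsub y, hsub ((A₂ + B₂ * K1) *ᵥ y)]
    have h1 := hle2 K1 y
    have h2 := heq1 y
    have h3 := hqfΔ1 y
    linarith
  have hC0a : ∀ y : Fin n → ℝ, y ⬝ᵥ (P₂ - P₁) *ᵥ y ≤ (spNorm P₂ + L) * ‖E y‖ ^ 2 := by
    intro y
    rw [hsub y]
    have h1 := qf_le_spNorm P₂ y
    have h2 := hP₁0 y
    have h3 : 0 ≤ L * ‖E y‖ ^ 2 := mul_nonneg hL0 (sq_nonneg _)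
    nlinarith
  have hC0nn : (0:ℝ) ≤ spNorm P₂ + L := by
    have := spNorm_nonneg P₂; linarith
  have hDup := series_bound P₁ (P₂ - P₁) (A₂ + B₂ * K1) (17/4*(δ*L^2)) (spNorm P₂ + L) L (1/2)
    (by norm_num) (by norm_num) hL1 hP₁le hP₁I hLyapN1 hstep1 hC0a hcΔ1 hC0nn
  have hDup' : ∀ x : Fin n → ℝ, x ⬝ᵥ (P₂ - P₁) *ᵥ x ≤ 17/2*(δ*L^3) * ‖E x‖ ^ 2 := by
    intro x
    have h := hDup x
    have heqc : 17/4*(δ*L^2)/(1/2)*L = 17/2*(δ*L^3) := by ring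
    rw [heqc] at h
    exact h
  have hP₂le : ∀ x : Fin n → ℝ, x ⬝ᵥ P₂ *ᵥ x ≤ 49/32*L * ‖E x‖ ^ 2 := by
    intro x
    have h1 := hDup' x
    rw [hsub x] at h1
    have h2 := hP₁le x
    have h3 : 17/2*(δ*L^3) ≤ 17/32*L := by
      have := mul_le_mul_of_nonneg_right hδL
        (show (0:ℝ) ≤ 17/2*L by nlinarith)
      nlinarith
    have h4 : 17/2*(δ*L^3)*‖E x‖^2 ≤ 17/32*L*‖E x‖^2 :=
      mul_le_mul_of_nonneg_right h3 (sq_nonneg _)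
    nlinarith
  -- ============ lower direction ============
  have hK2n : ∀ y : Fin n → ℝ, ‖E (K2 *ᵥ y)‖ ≤ 5/4*s * ‖E y‖ := by
    intro y
    apply Psi.le_of_sq_le_sq (normE_nonneg _)
      (mul_nonneg (mul_nonneg (by norm_num) hs0) (normE_nonneg _))
    have h := heq2 y
    have h1 := hP₂0 ((A₂ + B₂ * K2) *ᵥ y)
    have h2 := hQ0 y
    have h3 := hP₂le y
    have h4 : (5/4*s*‖E y‖)^2 = 25/16*L*‖E y‖^2 := by
      rw [mul_pow, mul_pow, hs2]; ring
    have h5 : 0 ≤ L * ‖E y‖^2 := mul_nonneg hL0 (sq_nonneg _)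
    calc ‖E (K2 *ᵥ y)‖ ^ 2 ≤ y ⬝ᵥ P₂ *ᵥ y := by linarith
      _ ≤ 49/32*L*‖E y‖^2 := h3
      _ ≤ (5/4*s*‖E y‖)^2 := by rw [h4]; nlinarith
  have hLyap2 : ∀ y : Fin n → ℝ,
      ((A₂ + B₂ * K2) *ᵥ y) ⬝ᵥ P₂ *ᵥ ((A₂ + B₂ * K2) *ᵥ y)
        ≤ y ⬝ᵥ P₂ *ᵥ y - 1 * ‖E y‖ ^ 2 := by
    intro y
    have h := heq2 y
    have h2 := hQI y
    nlinarith [sq_nonneg ‖E (K2 *ᵥ y)‖]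
  have hL2n : ∀ y : Fin n → ℝ, ‖E ((A₂ + B₂ * K2) *ᵥ y)‖ ≤ 5/4*s * ‖E y‖ := by
    intro y
    apply Psi.le_of_sq_le_sq (normE_nonneg _)
      (mul_nonneg (mul_nonneg (by norm_num) hs0) (normE_nonneg _))
    have h1 := hP₂I ((A₂ + B₂ * K2) *ᵥ y)
    have h2 := hLyap2 y
    have h3 := hP₂le y
    have h4 : (5/4*s*‖E y‖)^2 = 25/16*L*‖E y‖^2 := by
      rw [mul_pow, mul_pow, hs2]; ring
    have h5 : 0 ≤ L * ‖E y‖^2 := mul_nonneg hL0 (sq_nonneg _)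
    calc ‖E ((A₂ + B₂ * K2) *ᵥ y)‖ ^ 2 ≤ y ⬝ᵥ P₂ *ᵥ y := by nlinarith [sq_nonneg ‖E y‖]
      _ ≤ 49/32*L*‖E y‖^2 := h3
      _ ≤ (5/4*s*‖E y‖)^2 := by rw [h4]; nlinarith
  have hdiff2 : ∀ y : Fin n → ℝ,
      (A₁ + B₁ * K2) *ᵥ y - (A₂ + B₂ * K2) *ᵥ y
        = (A₁ - A₂) *ᵥ y + (B₁ - B₂) *ᵥ (K2 *ᵥ y) := by
    intro y
    rw [Matrix.add_mulVec, Matrix.add_mulVec, Matrix.sub_mulVec, Matrix.sub_mulVec,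
      Matrix.mulVec_mulVec, Matrix.mulVec_mulVec]
    abel
  have he2 : ∀ y : Fin n → ℝ,
      ‖E ((A₁ + B₁ * K2) *ᵥ y - (A₂ + B₂ * K2) *ᵥ y)‖ ≤ 9/4*δ*s * ‖E y‖ := by
    intro y
    rw [hdiff2 y]
    have h1 := hdA y
    have h2 := hdB (K2 *ᵥ y)
    have h3 := hK2n y
    have hkey : 0 ≤ δ * (s - 1) * ‖E y‖ :=
      mul_nonneg (mul_nonneg hδ0 (by linarith)) (normE_nonneg y)
    calc ‖E ((A₁ - A₂) *ᵥ y + (B₁ - B₂) *ᵥ (K2 *ᵥ y))‖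
        ≤ ‖E ((A₁ - A₂) *ᵥ y)‖ + ‖E ((B₁ - B₂) *ᵥ (K2 *ᵥ y))‖ := normE_add_le _ _
      _ ≤ δ * ‖E y‖ + δ * ‖E (K2 *ᵥ y)‖ := add_le_add h1 h2
      _ ≤ δ * ‖E y‖ + δ * (5/4*s * ‖E y‖) := by nlinarith
      _ ≤ 9/4*δ*s * ‖E y‖ := by nlinarith
  have hM2n : ∀ y : Fin n → ℝ, ‖E ((A₁ + B₁ * K2) *ᵥ y)‖ ≤ 89/64*s * ‖E y‖ := by
    intro y
    have hsplit : (A₁ + B₁ * K2) *ᵥ y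
        = (A₂ + B₂ * K2) *ᵥ y + ((A₁ + B₁ * K2) *ᵥ y - (A₂ + B₂ * K2) *ᵥ y) := by abel
    rw [hsplit]
    have hkey : 0 ≤ s * ‖E y‖ := mul_nonneg hs0 (normE_nonneg y)
    calc ‖E ((A₂ + B₂ * K2) *ᵥ y + ((A₁ + B₁ * K2) *ᵥ y - (A₂ + B₂ * K2) *ᵥ y))‖
        ≤ ‖E ((A₂ + B₂ * K2) *ᵥ y)‖ + ‖E ((A₁ + B₁ * K2) *ᵥ y - (A₂ + B₂ * K2) *ᵥ y)‖ :=
          normE_add_le _ _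
      _ ≤ 5/4*s * ‖E y‖ + 9/4*δ*s * ‖E y‖ := add_le_add (hL2n y) (he2 y)
      _ ≤ 89/64*s * ‖E y‖ := by nlinarith
  have hqfΔ2 : ∀ y : Fin n → ℝ,
      ((A₁ + B₁ * K2) *ᵥ y) ⬝ᵥ P₁ *ᵥ ((A₁ + B₁ * K2) *ᵥ y)
        - ((A₂ + B₂ * K2) *ᵥ y) ⬝ᵥ P₁ *ᵥ ((A₂ + B₂ * K2) *ᵥ y)
        ≤ 1521/256*(δ*L^2) * ‖E y‖ ^ 2 := by
    intro y
    rw [polar_qf P₁ hP₁t]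
    have h1 := abs_dot_le ((A₁ + B₁ * K2) *ᵥ y + (A₂ + B₂ * K2) *ᵥ y)
      (P₁ *ᵥ ((A₁ + B₁ * K2) *ᵥ y - (A₂ + B₂ * K2) *ᵥ y))
    have h2 := norm_mulVec_le P₁ ((A₁ + B₁ * K2) *ᵥ y - (A₂ + B₂ * K2) *ᵥ y)
    have h3 := he2 y
    have h4 : ‖E ((A₁ + B₁ * K2) *ᵥ y + (A₂ + B₂ * K2) *ᵥ y)‖ ≤ 169/64 * s * ‖E y‖ := by
      calc ‖E ((A₁ + B₁ * K2) *ᵥ y + (A₂ + B₂ * K2) *ᵥ y)‖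
          ≤ ‖E ((A₁ + B₁ * K2) *ᵥ y)‖ + ‖E ((A₂ + B₂ * K2) *ᵥ y)‖ := normE_add_le _ _
        _ ≤ 89/64*s * ‖E y‖ + 5/4*s * ‖E y‖ := add_le_add (hM2n y) (hL2n y)
        _ = 169/64 * s * ‖E y‖ := by ring
    have h5 : ‖E (P₁ *ᵥ ((A₁ + B₁ * K2) *ᵥ y - (A₂ + B₂ * K2) *ᵥ y))‖
        ≤ L * (9/4*δ*s * ‖E y‖) := by
      calc ‖E (P₁ *ᵥ ((A₁ + B₁ * K2) *ᵥ y - (A₂ + B₂ * K2) *ᵥ y))‖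
          ≤ L * ‖E ((A₁ + B₁ * K2) *ᵥ y - (A₂ + B₂ * K2) *ᵥ y)‖ := h2
        _ ≤ L * (9/4*δ*s * ‖E y‖) := mul_le_mul_of_nonneg_left h3 hL0
    calc ((A₁ + B₁ * K2) *ᵥ y + (A₂ + B₂ * K2) *ᵥ y) ⬝ᵥ
          P₁ *ᵥ ((A₁ + B₁ * K2) *ᵥ y - (A₂ + B₂ * K2) *ᵥ y)
        ≤ |((A₁ + B₁ * K2) *ᵥ y + (A₂ + B₂ * K2) *ᵥ y) ⬝ᵥ
          P₁ *ᵥ ((A₁ + B₁ * K2) *ᵥ y - (A₂ + B₂ * K2) *ᵥ y)| := le_abs_self _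
      _ ≤ ‖E ((A₁ + B₁ * K2) *ᵥ y + (A₂ + B₂ * K2) *ᵥ y)‖ *
          ‖E (P₁ *ᵥ ((A₁ + B₁ * K2) *ᵥ y - (A₂ + B₂ * K2) *ᵥ y))‖ := h1
      _ ≤ (169/64 * s * ‖E y‖) * (L * (9/4*δ*s * ‖E y‖)) := by
          apply mul_le_mul h4 h5 (normE_nonneg _)
          have : 0 ≤ s * ‖E y‖ := mul_nonneg hs0 (normE_nonneg y)
          nlinarith
      _ = 1521/256*(δ*(s^2*L)) * ‖E y‖ ^ 2 := by ring
      _ = 1521/256*(δ*L^2) * ‖E y‖ ^ 2 := by rw [hs2]; ring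
  have hstep2 : ∀ y : Fin n → ℝ, y ⬝ᵥ (P₁ - P₂) *ᵥ y
      ≤ ((A₂ + B₂ * K2) *ᵥ y) ⬝ᵥ (P₁ - P₂) *ᵥ ((A₂ + B₂ * K2) *ᵥ y)
        + 1521/256*(δ*L^2) * ‖E y‖ ^ 2 := by
    intro y
    rw [hsub' y, hsub' ((A₂ + B₂ * K2) *ᵥ y)]
    have h1 := hle1 K2 y
    have h2 := heq2 y
    have h3 := hqfΔ2 y
    linarith
  have hC0b : ∀ y : Fin n → ℝ, y ⬝ᵥ (P₁ - P₂) *ᵥ y ≤ (spNorm P₂ + L) * ‖E y‖ ^ 2 := by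
    intro y
    rw [hsub' y]
    have h1 := hP₁le y
    have h2 := hP₂0 y
    have h3 : 0 ≤ spNorm P₂ * ‖E y‖ ^ 2 := mul_nonneg (spNorm_nonneg _) (sq_nonneg _)
    nlinarith
  have hcΔ2 : (0:ℝ) ≤ 1521/256*(δ*L^2) :=
    mul_nonneg (by norm_num) (mul_nonneg hδ0 (sq_nonneg L))
  have hLP2 : (1:ℝ) ≤ 49/32*L := by linarith
  have hDdn := series_bound P₂ (P₁ - P₂) (A₂ + B₂ * K2) (1521/256*(δ*L^2)) (spNorm P₂ + L)
    (49/32*L) 1 one_pos le_rfl hLP2 hP₂le hP₂I hLyap2 hstep2 hC0b hcΔ2 hC0nn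
  have hDdn' : ∀ x : Fin n → ℝ, x ⬝ᵥ (P₁ - P₂) *ᵥ x ≤ 74529/8192*(δ*L^3) * ‖E x‖ ^ 2 := by
    intro x
    have h := hDdn x
    have heqc : 1521/256*(δ*L^2)/1*(49/32*L) = 74529/8192*(δ*L^3) := by ring
    rw [heqc] at h
    exact h
  -- ============ final assembly ============
  have hδL3 : (0:ℝ) ≤ δ*L^3 := mul_nonneg hδ0 (by positivity)
  have habsD : ∀ z : Fin n → ℝ, |z ⬝ᵥ (P₂ - P₁) *ᵥ z| ≤ 74529/8192*(δ*L^3) * ‖E z‖ ^ 2 := by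
    intro z
    have h1 := hDup' z
    have h2 := hDdn' z
    have hzz : z ⬝ᵥ (P₁ - P₂) *ᵥ z = -(z ⬝ᵥ (P₂ - P₁) *ᵥ z) := by
      rw [hsub z, hsub' z]; ring
    rw [hzz] at h2
    rw [abs_le]
    constructor
    · linarith
    · have hco : 17/2*(δ*L^3) ≤ 74529/8192*(δ*L^3) := by nlinarith
      have := mul_le_mul_of_nonneg_right hco (sq_nonneg ‖E z‖)
      linarith
  have hsymΨ : (Ψ₂ - Ψ₁)ᵀ = Ψ₂ - Ψ₁ := by
    rw [hΨ₁, hΨ₂]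
    simp [Matrix.transpose_sub, Matrix.transpose_add, Matrix.transpose_mul,
      Matrix.transpose_one, hP₁t, hP₂t, Matrix.mul_assoc]
  have hqfΨd : ∀ u : Fin m → ℝ, u ⬝ᵥ (Ψ₂ - Ψ₁) *ᵥ u
      = (B₂ *ᵥ u) ⬝ᵥ P₂ *ᵥ (B₂ *ᵥ u) - (B₁ *ᵥ u) ⬝ᵥ P₁ *ᵥ (B₁ *ᵥ u) := by
    intro u
    rw [hΨ₁, hΨ₂, Matrix.sub_mulVec, dotProduct_sub, Matrix.add_mulVec,
      Matrix.add_mulVec, dotProduct_add, dotProduct_add,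
      conj_qf B₂ P₂ u, conj_qf B₁ P₁ u]
    ring
  have hB1u : ∀ u : Fin m → ℝ, ‖E (B₁ *ᵥ u)‖ ≤ τ₁ * ‖E u‖ := fun u =>
    le_trans (norm_mulVec_le _ _) (mul_le_mul_of_nonneg_right hτB (normE_nonneg _))
  have hB2u : ∀ u : Fin m → ℝ, ‖E (B₂ *ᵥ u)‖ ≤ 17/16*τ₁ * ‖E u‖ := by
    intro u
    have hsplit : B₂ *ᵥ u = B₁ *ᵥ u + ((B₂ - B₁) *ᵥ u) := by
      rw [Matrix.sub_mulVec]; abel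
    rw [hsplit]
    have h1 := hB1u u
    have h2 := hdB' u
    have h3 : δ * ‖E u‖ ≤ 1/16*τ₁ * ‖E u‖ := by
      have : δ ≤ 1/16*τ₁ := by nlinarith
      exact mul_le_mul_of_nonneg_right this (normE_nonneg u)
    calc ‖E (B₁ *ᵥ u + (B₂ - B₁) *ᵥ u)‖
        ≤ ‖E (B₁ *ᵥ u)‖ + ‖E ((B₂ - B₁) *ᵥ u)‖ := normE_add_le _ _
      _ ≤ τ₁ * ‖E u‖ + δ * ‖E u‖ := add_le_add h1 h2
      _ ≤ 17/16*τ₁ * ‖E u‖ := by linarith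
  -- conclude via the symmetric quadratic-form bound
  have hcfin : (0:ℝ) ≤ 15 * τ₁ ^ 2 * L ^ 3 * δ := by
    have h1 : (0:ℝ) ≤ τ₁ ^ 2 := sq_nonneg _
    have h2 : (0:ℝ) ≤ L ^ 3 := by positivity
    nlinarith
  apply spNorm_le_of_qf (Ψ₂ - Ψ₁) hsymΨ _ hcfin
  intro u
  have hdec : u ⬝ᵥ (Ψ₂ - Ψ₁) *ᵥ u
      = (B₂ *ᵥ u) ⬝ᵥ (P₂ - P₁) *ᵥ (B₂ *ᵥ u)
        + ((B₂ *ᵥ u) + (B₁ *ᵥ u)) ⬝ᵥ P₁ *ᵥ ((B₂ *ᵥ u) - (B₁ *ᵥ u)) := by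
    rw [hqfΨd u, hsub (B₂ *ᵥ u)]
    have hp := polar_qf P₁ hP₁t (B₂ *ᵥ u) (B₁ *ᵥ u)
    linarith
  have habs2 : |((B₂ *ᵥ u) + (B₁ *ᵥ u)) ⬝ᵥ P₁ *ᵥ ((B₂ *ᵥ u) - (B₁ *ᵥ u))|
      ≤ 33/16*τ₁*L*δ * ‖E u‖ ^ 2 := by
    have h1 := abs_dot_le ((B₂ *ᵥ u) + (B₁ *ᵥ u)) (P₁ *ᵥ ((B₂ *ᵥ u) - (B₁ *ᵥ u)))
    have h2 : ‖E ((B₂ *ᵥ u) + (B₁ *ᵥ u))‖ ≤ 33/16*τ₁ * ‖E u‖ := by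
      calc ‖E ((B₂ *ᵥ u) + (B₁ *ᵥ u))‖ ≤ ‖E (B₂ *ᵥ u)‖ + ‖E (B₁ *ᵥ u)‖ := normE_add_le _ _
        _ ≤ 17/16*τ₁ * ‖E u‖ + τ₁ * ‖E u‖ := add_le_add (hB2u u) (hB1u u)
        _ = 33/16*τ₁ * ‖E u‖ := by ring
    have hd : (B₂ *ᵥ u) - (B₁ *ᵥ u) = (B₂ - B₁) *ᵥ u := (Matrix.sub_mulVec _ _ _).symm
    have h3 : ‖E (P₁ *ᵥ ((B₂ *ᵥ u) - (B₁ *ᵥ u)))‖ ≤ L * (δ * ‖E u‖) := by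
      calc ‖E (P₁ *ᵥ ((B₂ *ᵥ u) - (B₁ *ᵥ u)))‖
          ≤ L * ‖E ((B₂ *ᵥ u) - (B₁ *ᵥ u))‖ := norm_mulVec_le _ _
        _ ≤ L * (δ * ‖E u‖) := by
            rw [hd]
            exact mul_le_mul_of_nonneg_left (hdB' u) hL0
    calc |((B₂ *ᵥ u) + (B₁ *ᵥ u)) ⬝ᵥ P₁ *ᵥ ((B₂ *ᵥ u) - (B₁ *ᵥ u))|
        ≤ ‖E ((B₂ *ᵥ u) + (B₁ *ᵥ u))‖ * ‖E (P₁ *ᵥ ((B₂ *ᵥ u) - (B₁ *ᵥ u)))‖ := h1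
      _ ≤ (33/16*τ₁ * ‖E u‖) * (L * (δ * ‖E u‖)) := by
          apply mul_le_mul h2 h3 (normE_nonneg _)
          have : (0:ℝ) ≤ τ₁ * ‖E u‖ := mul_nonneg (by linarith) (normE_nonneg u)
          nlinarith
      _ = 33/16*τ₁*L*δ * ‖E u‖ ^ 2 := by ring
  have habs1 : |(B₂ *ᵥ u) ⬝ᵥ (P₂ - P₁) *ᵥ (B₂ *ᵥ u)|
      ≤ 74529/8192*(δ*L^3) * (17/16*τ₁ * ‖E u‖) ^ 2 := by
    have h1 := habsD (B₂ *ᵥ u)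
    have h2 : ‖E (B₂ *ᵥ u)‖ ^ 2 ≤ (17/16*τ₁ * ‖E u‖) ^ 2 :=
      pow_le_pow_left₀ (normE_nonneg _) (hB2u u) 2
    have h3 := mul_le_mul_of_nonneg_left h2
      (show (0:ℝ) ≤ 74529/8192*(δ*L^3) by nlinarith)
    linarith
  have htri : |u ⬝ᵥ (Ψ₂ - Ψ₁) *ᵥ u|
      ≤ 74529/8192*(δ*L^3) * (17/16*τ₁ * ‖E u‖) ^ 2 + 33/16*τ₁*L*δ * ‖E u‖ ^ 2 := by
    rw [hdec]
    calc |(B₂ *ᵥ u) ⬝ᵥ (P₂ - P₁) *ᵥ (B₂ *ᵥ u)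
          + ((B₂ *ᵥ u) + (B₁ *ᵥ u)) ⬝ᵥ P₁ *ᵥ ((B₂ *ᵥ u) - (B₁ *ᵥ u))|
        ≤ |(B₂ *ᵥ u) ⬝ᵥ (P₂ - P₁) *ᵥ (B₂ *ᵥ u)|
          + |((B₂ *ᵥ u) + (B₁ *ᵥ u)) ⬝ᵥ P₁ *ᵥ ((B₂ *ᵥ u) - (B₁ *ᵥ u))| := abs_add_le _ _
      _ ≤ _ := add_le_add habs1 habs2
  -- final numeric comparison
  have hfin1 : 74529/8192*(δ*L^3) * (17/16*τ₁ * ‖E u‖) ^ 2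
      = 21538881/2097152 * (τ₁^2 * L^3 * δ) * ‖E u‖ ^ 2 := by ring
  have hfin2 : 33/16*τ₁*L*δ * ‖E u‖ ^ 2 ≤ 33/16 * (τ₁^2 * L^3 * δ) * ‖E u‖ ^ 2 := by
    have hτ2 : τ₁ ≤ τ₁^2 := by nlinarith
    have hL3 : L ≤ L^3 := by nlinarith
    have hk1 : τ₁ * L ≤ τ₁^2 * L^3 := by nlinarith
    have hk2 : τ₁ * L * (δ * ‖E u‖^2) ≤ τ₁^2 * L^3 * (δ * ‖E u‖^2) :=
      mul_le_mul_of_nonneg_right hk1 (mul_nonneg hδ0 (sq_nonneg _))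
    nlinarith
  have hfin3 : 21538881/2097152 * (τ₁^2 * L^3 * δ) * ‖E u‖ ^ 2
      + 33/16 * (τ₁^2 * L^3 * δ) * ‖E u‖ ^ 2 ≤ 15 * τ₁ ^ 2 * L ^ 3 * δ * ‖E u‖ ^ 2 := by
    have hco : (21538881/2097152 : ℝ) + 33/16 ≤ 15 := by norm_num
    have hnn : (0:ℝ) ≤ τ₁^2 * L^3 * δ * ‖E u‖^2 := by
      have : (0:ℝ) ≤ τ₁^2 := sq_nonneg _
      have : (0:ℝ) ≤ L^3 := by positivity
      positivity
    nlinarith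
  calc |u ⬝ᵥ (Ψ₂ - Ψ₁) *ᵥ u|
      ≤ 74529/8192*(δ*L^3) * (17/16*τ₁ * ‖E u‖) ^ 2 + 33/16*τ₁*L*δ * ‖E u‖ ^ 2 := htri
    _ ≤ 15 * τ₁ ^ 2 * L ^ 3 * δ * ‖E u‖ ^ 2 := by rw [hfin1]; linarith [hfin2, hfin3]
end

section
/- Let d ≥ 1 and let Γ ∈ ℝ^{d×d} be symmetric positive definite. Let μ be the uniform probability measure on the ellipsoid E = {w ∈ ℝ^d : wᵀΓw ≤ 1} (Lebesgue measure restricted to E and normalized). Then μ has mean zero and its covariance matrix satisfies ∫_E w wᵀ dμ(w) = (1/(d + 2))·Γ⁻¹. -/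
open MeasureTheory Metric Matrix
open scoped MatrixOrder

section Aux

variable {d : ℕ}

lemma normsq_eq_sum (x : EuclideanSpace ℝ (Fin d)) : ‖x‖^2 = ∑ i, x i * x i := by
  rw [EuclideanSpace.norm_eq, Real.sq_sqrt (by positivity)]
  congr 1; ext i; rw [Real.norm_eq_abs, ← sq, sq_abs, sq]

lemma normsq_ball_integral (hd : 1 ≤ d) :
    ∫ x in closedBall (0 : EuclideanSpace ℝ (Fin d)) 1, ‖x‖^2 =
      d * (volume (closedBall (0 : EuclideanSpace ℝ (Fin d)) 1)).toReal / (d + 2) := by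
  haveI : Nonempty (Fin d) := ⟨⟨0, hd⟩⟩
  have h1 := integral_fun_norm_addHaar (volume : Measure (EuclideanSpace ℝ (Fin d)))
      (fun y : ℝ => if y ≤ 1 then y^2 else 0)
  have hfr : Module.finrank ℝ (EuclideanSpace ℝ (Fin d)) = d := by
    simp [finrank_euclideanSpace]
  rw [hfr] at h1
  have hL : ∫ x : EuclideanSpace ℝ (Fin d), (fun y : ℝ => if y ≤ 1 then y^2 else 0) ‖x‖ =
      ∫ x in closedBall (0 : EuclideanSpace ℝ (Fin d)) 1, ‖x‖^2 := by
    rw [← integral_indicator (measurableSet_closedBall)]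
    congr 1
    ext x
    by_cases hx : ‖x‖ ≤ 1
    · simp [Set.indicator, mem_closedBall_zero_iff, hx]
    · simp [Set.indicator, mem_closedBall_zero_iff, hx]
  have hR : ∫ y in Set.Ioi (0:ℝ), y ^ (d - 1) • (fun y : ℝ => if y ≤ 1 then y^2 else 0) y
      = 1 / (d + 2) := by
    have : ∀ y ∈ Set.Ioi (0:ℝ), y ^ (d - 1) • (fun y : ℝ => if y ≤ 1 then y^2 else 0) y
        = Set.indicator (Set.Ioc (0:ℝ) 1) (fun y => y ^ (d + 1)) y := by
      intro y hy
      by_cases hy1 : y ≤ 1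
      · have : y ∈ Set.Ioc (0:ℝ) 1 := ⟨hy, hy1⟩
        simp only [Set.indicator_of_mem this, hy1, if_pos, smul_eq_mul]
        rw [← pow_add]
        congr 1
        omega
      · have : y ∉ Set.Ioc (0:ℝ) 1 := fun h => hy1 h.2
        simp [Set.indicator_of_notMem this, hy1]
    rw [setIntegral_congr_fun measurableSet_Ioi this, setIntegral_indicator measurableSet_Ioc]
    have : Set.Ioi (0:ℝ) ∩ Set.Ioc (0:ℝ) 1 = Set.Ioc (0:ℝ) 1 := by
      ext y; simp (config := {contextual := true}) [Set.mem_Ioc, Set.mem_Ioi]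
    rw [this, ← intervalIntegral.integral_of_le (by norm_num : (0:ℝ) ≤ 1)]
    have hpow : (∫ x in (0:ℝ)..1, x ^ (d+1)) = ((1:ℝ)^(d+1+1) - 0^(d+1+1))/((d:ℝ)+1+1) := by
      rw [integral_pow (d+1)]; push_cast; ring
    rw [hpow]
    norm_num
    ring
  rw [hL, hR] at h1
  rw [h1, Measure.addHaar_closedBall_eq_addHaar_ball]
  simp only [nsmul_eq_mul, smul_eq_mul, measureReal_def]
  ring

lemma iso_setIntegral {F : Type*} [NormedAddCommGroup F] [NormedSpace ℝ F]
    (e : EuclideanSpace ℝ (Fin d) ≃ₗᵢ[ℝ] EuclideanSpace ℝ (Fin d))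
    (s : Set (EuclideanSpace ℝ (Fin d))) (g : EuclideanSpace ℝ (Fin d) → F) :
    ∫ y in e '' s, g y = ∫ x in s, g (e x) :=
  e.measurePreserving.setIntegral_image_emb e.toHomeomorph.measurableEmbedding g s

lemma iso_image_ball (e : EuclideanSpace ℝ (Fin d) ≃ₗᵢ[ℝ] EuclideanSpace ℝ (Fin d)) :
    e '' closedBall (0 : EuclideanSpace ℝ (Fin d)) 1 = closedBall 0 1 := by
  have := e.toIsometryEquiv.image_closedBall (0 : EuclideanSpace ℝ (Fin d)) 1
  simpa using this

lemma ball_moment_offdiag {i j : Fin d} (hij : i ≠ j) :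
    ∫ x in closedBall (0 : EuclideanSpace ℝ (Fin d)) 1, x i * x j = 0 := by
  classical
  set e : EuclideanSpace ℝ (Fin d) ≃ₗᵢ[ℝ] EuclideanSpace ℝ (Fin d) :=
    LinearIsometryEquiv.piLpCongrRight 2
      (fun k => if k = j then (LinearIsometryEquiv.neg ℝ : ℝ ≃ₗᵢ[ℝ] ℝ) else
        LinearIsometryEquiv.refl ℝ ℝ) with he
  have happ : ∀ (x : EuclideanSpace ℝ (Fin d)) (k : Fin d),
      e x k = if k = j then -x k else x k := by
    intro x k
    by_cases hk : k = j
    · subst hk; simp [he, LinearIsometryEquiv.piLpCongrRight_apply]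
    · simp [he, LinearIsometryEquiv.piLpCongrRight_apply, hk]
  have key := iso_setIntegral e (closedBall 0 1) (fun y => y i * y j)
  rw [iso_image_ball] at key
  have : ∀ x : EuclideanSpace ℝ (Fin d), e x i * e x j = -(x i * x j) := by
    intro x
    rw [happ, happ, if_neg hij, if_pos rfl]
    ring
  simp only [this] at key
  rw [integral_neg] at key
  linarith

lemma ball_moment_diag_eq (i j : Fin d) :
    ∫ x in closedBall (0 : EuclideanSpace ℝ (Fin d)) 1, x i * x i =
    ∫ x in closedBall (0 : EuclideanSpace ℝ (Fin d)) 1, x j * x j := by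
  classical
  set e : EuclideanSpace ℝ (Fin d) ≃ₗᵢ[ℝ] EuclideanSpace ℝ (Fin d) :=
    LinearIsometryEquiv.piLpCongrLeft 2 ℝ ℝ (Equiv.swap i j) with he
  have happ : ∀ x : EuclideanSpace ℝ (Fin d), e x i = x j := by
    intro x
    simp only [he, LinearIsometryEquiv.piLpCongrLeft_apply, Equiv.piCongrLeft'_apply,
      Equiv.symm_swap]
    rw [Equiv.swap_apply_left]
  have key := iso_setIntegral e (closedBall 0 1) (fun y => y i * y i)
  rw [iso_image_ball] at key
  simp only [happ] at key
  exact key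

lemma proj_continuous (i : Fin d) : Continuous (fun x : EuclideanSpace ℝ (Fin d) => x i) :=
  (EuclideanSpace.proj i).continuous

lemma mul_proj_integrableOn (i j : Fin d) (s : Set (EuclideanSpace ℝ (Fin d)))
    (hs : IsCompact s) : IntegrableOn (fun x : EuclideanSpace ℝ (Fin d) => x i * x j) s :=
  (((proj_continuous i).mul (proj_continuous j))).continuousOn.integrableOn_compact hs

lemma ball_moment (hd : 1 ≤ d) (k l : Fin d) :
    ∫ x in closedBall (0 : EuclideanSpace ℝ (Fin d)) 1, x k * x l =
      if k = l then (volume (closedBall (0 : EuclideanSpace ℝ (Fin d)) 1)).toReal / (d + 2)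
      else 0 := by
  by_cases hkl : k = l
  · subst hkl
    rw [if_pos rfl]
    have hsum : ∫ x in closedBall (0 : EuclideanSpace ℝ (Fin d)) 1, ‖x‖^2 =
        ∑ i : Fin d, ∫ x in closedBall (0 : EuclideanSpace ℝ (Fin d)) 1, x i * x i := by
      rw [← integral_finset_sum _ (fun i _ => mul_proj_integrableOn i i _ (isCompact_closedBall _ _))]
      exact setIntegral_congr_fun measurableSet_closedBall (fun x _ => normsq_eq_sum x)
    have hdiag : ∀ i : Fin d, (∫ x in closedBall (0 : EuclideanSpace ℝ (Fin d)) 1, x i * x i)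
        = ∫ x in closedBall (0 : EuclideanSpace ℝ (Fin d)) 1, x k * x k :=
      fun i => ball_moment_diag_eq i k
    rw [normsq_ball_integral hd] at hsum
    simp only [hdiag, Finset.sum_const, Finset.card_univ, Fintype.card_fin, nsmul_eq_mul] at hsum
    have hd0 : (d : ℝ) ≠ 0 := by positivity
    field_simp at hsum
    have h2 : (d:ℝ) * (volume (closedBall (0:EuclideanSpace ℝ (Fin d)) 1)).toReal =
        (d:ℝ) * ((∫ x in closedBall (0 : EuclideanSpace ℝ (Fin d)) 1, x k * x k) * ((d:ℝ)+2)) := by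
      simp only [sq] at hsum; rw [hsum]; ring
    have h3 := mul_left_cancel₀ hd0 h2
    rw [eq_div_iff (by positivity : ((d:ℝ)+2) ≠ 0)]
    linarith
  · rw [if_neg hkl]
    exact ball_moment_offdiag hkl

lemma det_toEuclideanLin (A : Matrix (Fin d) (Fin d) ℝ) :
    LinearMap.det (Matrix.toEuclideanLin A) = A.det := by
  have h : Matrix.toEuclideanLin A =
      (((WithLp.linearEquiv 2 ℝ (Fin d → ℝ)).symm :
          (Fin d → ℝ) ≃ₗ[ℝ] EuclideanSpace ℝ (Fin d)) : (Fin d → ℝ) →ₗ[ℝ] EuclideanSpace ℝ (Fin d)) ∘ₗ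
        (Matrix.toLin' A) ∘ₗ
        (((WithLp.linearEquiv 2 ℝ (Fin d → ℝ)) :
          EuclideanSpace ℝ (Fin d) ≃ₗ[ℝ] (Fin d → ℝ)) : EuclideanSpace ℝ (Fin d) →ₗ[ℝ] (Fin d → ℝ)) := rfl
  rw [h]
  have h2 := LinearMap.det_conj (Matrix.toLin' A) (WithLp.linearEquiv 2 ℝ (Fin d → ℝ)).symm
  simp only [LinearEquiv.symm_symm] at h2
  rw [h2, LinearMap.det_toLin']

lemma toEuclideanLin_apply' (A : Matrix (Fin d) (Fin d) ℝ) (x : EuclideanSpace ℝ (Fin d))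
    (i : Fin d) : Matrix.toEuclideanLin A x i = A.mulVec (fun j => x j) i := rfl

end Aux

/-- The uniform distribution on the ellipsoid {w : wᵀΓw ≤ 1} has mean zero and
covariance (1/(d+2))·Γ⁻¹. -/
theorem uniform_ellipsoid_mean_covariance {d : ℕ} (hd : 1 ≤ d)
    (Γ : Matrix (Fin d) (Fin d) ℝ) (hΓ : Γ.PosDef)
    (E : Set (EuclideanSpace ℝ (Fin d)))
    (hE : E = {w : EuclideanSpace ℝ (Fin d) | ∑ i, ∑ j, w i * Γ i j * w j ≤ 1})
    (μ : Measure (EuclideanSpace ℝ (Fin d)))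
    (hμ : μ = (volume E)⁻¹ • volume.restrict E) :
    (∫ w, w ∂μ) = 0 ∧
    ∀ i j, (∫ w, w i * w j ∂μ) = (1 / ((d : ℝ) + 2)) * Γ⁻¹ i j := by
  classical
  haveI : Nonempty (Fin d) := ⟨⟨0, hd⟩⟩
  -- the square root of Γ and its inverse
  set S := CFC.sqrt Γ with hSdef
  have hSsym : Sᵀ = S := by
    have h := (CFC.sqrt_nonneg Γ).posSemidef.1
    rwa [Matrix.IsHermitian, Matrix.conjTranspose_eq_transpose_of_trivial] at h
  have hSS : S * S = Γ := CFC.sqrt_mul_sqrt_self Γ hΓ.posSemidef.nonneg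
  have hdetΓ : 0 < Γ.det := hΓ.det_pos
  have hdetS : S.det ≠ 0 := by
    intro h
    rw [← hSS, Matrix.det_mul, h, mul_zero] at hdetΓ
    exact lt_irrefl _ hdetΓ
  have hSu : IsUnit S.det := isUnit_iff_ne_zero.mpr hdetS
  set A := S⁻¹ with hAdef
  have hAsym : Aᵀ = A := by rw [hAdef, Matrix.transpose_nonsing_inv, hSsym]
  have hAS : A * S = 1 := Matrix.nonsing_inv_mul S hSu
  have hSA : S * A = 1 := Matrix.mul_nonsing_inv S hSu
  have hAΓ : A * Γ = S := by
    rw [← hSS, ← Matrix.mul_assoc, hAS, Matrix.one_mul]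
  have hAΓA : A * Γ * A = 1 := by rw [hAΓ, hSA]
  have hAA : A * A = Γ⁻¹ := by
    rw [← hSS, Matrix.mul_inv_rev, hAdef]
  have hdetA : A.det ≠ 0 := by
    have h1 : A.det * S.det = 1 := by rw [← Matrix.det_mul, hAS, Matrix.det_one]
    exact left_ne_zero_of_mul_eq_one h1
  have hAentry : ∀ p q, A p q = A q p := by
    intro p q
    conv_lhs => rw [← hAsym]
    exact Matrix.transpose_apply A p q
  -- the linear maps
  set T := Matrix.toEuclideanLin A with hTdef
  set Tinv := Matrix.toEuclideanLin S with hTinvdef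
  have hTTinv : ∀ w : EuclideanSpace ℝ (Fin d), T (Tinv w) = w := by
    intro w
    ext i
    rw [hTdef, toEuclideanLin_apply']
    have : (fun j => Tinv w j) = S.mulVec (fun j => w j) := by
      funext j; rw [hTinvdef, toEuclideanLin_apply']
    rw [this, Matrix.mulVec_mulVec, hAS, Matrix.one_mulVec]
  have hTinvT : ∀ x : EuclideanSpace ℝ (Fin d), Tinv (T x) = x := by
    intro x
    ext i
    rw [hTinvdef, toEuclideanLin_apply']
    have : (fun j => T x j) = A.mulVec (fun j => x j) := by
      funext j; rw [hTdef, toEuclideanLin_apply']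
    rw [this, Matrix.mulVec_mulVec, hSA, Matrix.one_mulVec]
  have hTinj : Function.Injective T := Function.LeftInverse.injective hTinvT
  -- the quadratic form identity
  have hQ : ∀ x : EuclideanSpace ℝ (Fin d),
      ∑ i, ∑ j, (T x) i * Γ i j * (T x) j = ‖x‖^2 := by
    intro x
    set v : Fin d → ℝ := fun j => x j with hv
    have h1 : ∀ i, (T x) i = A.mulVec v i := fun i => toEuclideanLin_apply' A x i
    have h2 : ∑ i, ∑ j, (T x) i * Γ i j * (T x) j
        = (A.mulVec v) ⬝ᵥ (Γ.mulVec (A.mulVec v)) := by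
      simp only [h1, dotProduct, Matrix.mulVec, Finset.mul_sum]
      exact Finset.sum_congr rfl fun i _ => Finset.sum_congr rfl fun j _ =>
        Finset.sum_congr rfl fun m _ => by ring
    rw [h2, Matrix.mulVec_mulVec]
    have h3 : A.mulVec v = v ᵥ* A := by
      conv_lhs => rw [← hAsym, Matrix.mulVec_transpose]
    rw [h3, Matrix.dotProduct_mulVec, Matrix.vecMul_vecMul, ← Matrix.mul_assoc, hAΓA,
      Matrix.vecMul_one, normsq_eq_sum]
    simp [dotProduct, hv]
  -- the ellipsoid is the image of the unit ball
  have hEimg : E = T '' closedBall 0 1 := by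
    rw [hE]
    ext w
    constructor
    · intro hw
      refine ⟨Tinv w, ?_, hTTinv w⟩
      rw [mem_closedBall_zero_iff]
      have h4 : ‖Tinv w‖^2 ≤ 1 := by
        have := hQ (Tinv w)
        rw [hTTinv w] at this
        rw [← this]
        exact hw
      nlinarith [norm_nonneg (Tinv w)]
    · rintro ⟨x, hx, rfl⟩
      show ∑ i, ∑ j, (T x) i * Γ i j * (T x) j ≤ 1
      rw [hQ x]
      rw [mem_closedBall_zero_iff] at hx
      nlinarith [norm_nonneg x]
  -- change of variables
  have hdetT : LinearMap.det (T : EuclideanSpace ℝ (Fin d) →ₗ[ℝ] EuclideanSpace ℝ (Fin d))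
      = A.det := det_toEuclideanLin A
  set D := |A.det| with hDdef
  have hD : 0 < D := abs_pos.mpr hdetA
  set B := closedBall (0 : EuclideanSpace ℝ (Fin d)) 1 with hB
  set V := (volume B).toReal with hV
  have hVpos : 0 < V := by
    rw [hV]
    refine ENNReal.toReal_pos ?_ ?_
    · exact (measure_closedBall_pos volume 0 one_pos).ne'
    · exact measure_closedBall_lt_top.ne
  have hCOV : ∀ {F : Type} [NormedAddCommGroup F] [NormedSpace ℝ F] [CompleteSpace F]
      (g : EuclideanSpace ℝ (Fin d) → F),
      ∫ w in E, g w = ∫ x in B, D • g (T x) := by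
    intro F _ _ _ g
    rw [hEimg]
    have hder : ∀ x ∈ B, HasFDerivWithinAt T
        (LinearMap.toContinuousLinearMap (T : EuclideanSpace ℝ (Fin d) →ₗ[ℝ] EuclideanSpace ℝ (Fin d))) B x :=
      fun x _ => (LinearMap.toContinuousLinearMap
        (T : EuclideanSpace ℝ (Fin d) →ₗ[ℝ] EuclideanSpace ℝ (Fin d))).hasFDerivAt.hasFDerivWithinAt
    have := integral_image_eq_integral_abs_det_fderiv_smul volume
      (measurableSet_closedBall (x := (0 : EuclideanSpace ℝ (Fin d))) (ε := 1))
      hder hTinj.injOn g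
    rw [this]
    congr 1
    funext x
    congr 1
    rw [hDdef, ← hdetT]
    rfl
  have hvolE : volume E = ENNReal.ofReal D * volume B := by
    rw [hEimg]
    have := Measure.addHaar_image_linearMap (volume : Measure (EuclideanSpace ℝ (Fin d)))
      (T : EuclideanSpace ℝ (Fin d) →ₗ[ℝ] EuclideanSpace ℝ (Fin d)) B
    rw [this, hdetT, hDdef]
  have hvolE_ne : volume E ≠ 0 := by
    rw [hvolE]
    refine mul_ne_zero ?_ (measure_closedBall_pos volume 0 one_pos).ne'
    simp [ENNReal.ofReal_eq_zero, not_le, hD]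
  have hvolE_top : volume E ≠ ⊤ := by
    rw [hvolE]
    exact ENNReal.mul_ne_top ENNReal.ofReal_ne_top measure_closedBall_lt_top.ne
  have hconst : ((volume E)⁻¹).toReal = (D * V)⁻¹ := by
    rw [ENNReal.toReal_inv, hvolE, ENNReal.toReal_mul, ENNReal.toReal_ofReal hD.le]
  -- mean zero
  have hmean : (∫ w, w ∂μ) = 0 := by
    rw [hμ, integral_smul_measure]
    have hEneg : (LinearIsometryEquiv.neg ℝ :
        EuclideanSpace ℝ (Fin d) ≃ₗᵢ[ℝ] EuclideanSpace ℝ (Fin d)) '' E = E := by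
      have hmem : ∀ w : EuclideanSpace ℝ (Fin d), w ∈ E → -w ∈ E := by
        intro w hw
        rw [hE] at hw ⊢
        simp only [Set.mem_setOf_eq] at hw ⊢
        have : ∀ i j : Fin d, (-w) i * Γ i j * (-w) j = w i * Γ i j * w j := by
          intro i j
          rw [PiLp.neg_apply, PiLp.neg_apply]
          ring
        simp only [this]
        exact hw
      ext y
      constructor
      · rintro ⟨x, hx, rfl⟩
        exact hmem x hx
      · intro hy
        exact ⟨-y, hmem y hy, by simp⟩
    have key := iso_setIntegral (LinearIsometryEquiv.neg ℝ :
        EuclideanSpace ℝ (Fin d) ≃ₗᵢ[ℝ] EuclideanSpace ℝ (Fin d)) E (fun y => y)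
    rw [hEneg] at key
    simp only [LinearIsometryEquiv.coe_neg] at key
    rw [integral_neg] at key
    have hI : (∫ w in E, w) = (0 : EuclideanSpace ℝ (Fin d)) := by
      have h2 : (∫ w in E, w) + (∫ w in E, w) = 0 := by
        nth_rewrite 1 [key]
        simp
      have h3 : (2:ℝ) • (∫ w in E, w) = 0 := by
        rw [two_smul]
        exact h2
      have := smul_eq_zero.mp h3
      rcases this with h | h
      · norm_num at h
      · exact h
    rw [hI, smul_zero]
  refine ⟨hmean, ?_⟩
  -- covariance
  intro i j
  rw [hμ, integral_smul_measure, smul_eq_mul, hconst]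
  have hTx : ∀ (x : EuclideanSpace ℝ (Fin d)) (k : Fin d), (T x) k = ∑ m, A k m * x m := by
    intro x k
    rw [toEuclideanLin_apply']
    simp [Matrix.mulVec, dotProduct]
  have hprod : ∀ x : EuclideanSpace ℝ (Fin d),
      (T x) i * (T x) j = ∑ k, ∑ l, A i k * A j l * (x k * x l) := by
    intro x
    rw [hTx, hTx, Finset.sum_mul_sum]
    exact Finset.sum_congr rfl fun k _ => Finset.sum_congr rfl fun l _ => by ring
  have hint : ∫ x in B, (T x) i * (T x) j = Γ⁻¹ i j * (V / (d + 2)) := by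
    have h1 : ∫ x in B, (T x) i * (T x) j
        = ∑ k, ∑ l, A i k * A j l * ∫ x in B, x k * x l := by
      rw [show (fun x : EuclideanSpace ℝ (Fin d) => (T x) i * (T x) j)
          = fun x => ∑ k, ∑ l, A i k * A j l * (x k * x l) from funext hprod]
      rw [integral_finset_sum _ (fun k _ => integrable_finset_sum _ (fun l _ =>
        (mul_proj_integrableOn k l B (isCompact_closedBall _ _)).const_mul _))]
      exact Finset.sum_congr rfl fun k _ => by
        rw [integral_finset_sum _ (fun l _ =>
          (mul_proj_integrableOn k l B (isCompact_closedBall _ _)).const_mul _)]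
        exact Finset.sum_congr rfl fun l _ => integral_const_mul _ _
    rw [h1]
    have h2 : ∀ k l : Fin d, (∫ x in B, x k * x l)
        = if k = l then V / (d + 2) else 0 := fun k l => ball_moment hd k l
    simp only [h2, mul_ite, mul_zero, Finset.sum_ite_eq, Finset.mem_univ, if_true]
    have h3 : Γ⁻¹ i j = ∑ k, A i k * A j k := by
      rw [← hAA, Matrix.mul_apply]
      exact Finset.sum_congr rfl fun k _ => by rw [hAentry k j]
    rw [h3, Finset.sum_mul]
  have h4 : ∫ w in E, w i * w j = D * (Γ⁻¹ i j * (V / (d + 2))) := by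
    rw [hCOV (fun w => w i * w j)]
    simp only [smul_eq_mul]
    rw [integral_const_mul, hint]
  rw [h4]
  have hd2 : ((d:ℝ) + 2) ≠ 0 := by positivity
  field_simp
end

section
/- Consider the scalar LQR problem with input gain b = 1, state cost q = 1, and input cost r = 1000. For a ∈ [0.3, 1.8], let p > 0 satisfy the scalar discrete algebraic Riccati equation p = a²p − a²p²/(p + 1000) + 1, and let k = −a·p/(p + 1000) be the corresponding LQR gain. Then for every a' ∈ [0.3, a], the closed-loop system satisfies |a' + k| < 0.97, and consequently the stationary variance σ = 1/(1 − (a' + k)²) satisfies σ ≤ 20. (Hence the scalar instance a* = 1.05 is (20, 0.75)-robustly stabilizable by certainty equivalence.) -/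
set_option maxHeartbeats 1000000

/-- Robust stabilizability of the scalar example: for any a ∈ [0.3, 1.8], the CE gain
synthesized from a stabilizes every a' ∈ [0.3, a] with closed-loop coefficient below 0.97
and stationary variance at most 20 (hence a* = 1.05 is (20, 0.75)-robustly stabilizable
by certainty equivalence). -/
theorem scalar_robust_stabilizability
    (a : ℝ) (ha : a ∈ Set.Icc (0.3 : ℝ) 1.8)
    (p : ℝ) (hp : 0 < p)
    (hdare : p = a ^ 2 * p - a ^ 2 * p ^ 2 / (p + 1000) + 1)
    (k : ℝ) (hk : k = -(a * p / (p + 1000))) :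
    ∀ a' ∈ Set.Icc (0.3 : ℝ) a,
      |a' + k| < 0.97 ∧ 1 / (1 - (a' + k) ^ 2) ≤ 20 := by
  obtain ⟨ha1, ha2⟩ := ha
  have hpp : (0:ℝ) < p + 1000 := by linarith
  have hne : p + 1000 ≠ 0 := ne_of_gt hpp
  have hq : p^2 + 999*p = 1000*a^2*p + 1000 := by
    field_simp at hdare
    linarith
  have hc : a + k = 1000*a/(p+1000) := by
    rw [hk]; field_simp; ring
  have hkey : (a+k)^2 * (p*(p+1000)) = 1000*(p-1) := by
    rw [hc]
    field_simp
    linear_combination (-1) * hq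
  have hc0 : 0 ≤ a + k := by
    rw [hc]; positivity
  have hc2 : (a+k)^2 < 0.9409 := by
    nlinarith [sq_nonneg (9409*p - 295500), mul_pos hp hpp, sq_nonneg (a+k)]
  have hc97 : a + k < 0.97 := by nlinarith
  -- bound on p
  have hca : (a+k) * (p+1000) = 1000*a := by
    rw [hc]; field_simp
  have h18 : (a+k) * (p+1000) ≤ 1800 := by rw [hca]; linarith
  have hsq : ((a+k)*(p+1000))^2 ≤ 1800^2 := by
    nlinarith [mul_nonneg hc0 hpp.le]
  have hkey2 : (a+k)^2 * (p*(p+1000)^2) = 1000*(p-1)*(p+1000) := by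
    linear_combination (p+1000) * hkey
  have hP : p^2 ≤ 2241*p + 1000 := by
    nlinarith [hkey2, mul_le_mul_of_nonneg_right hsq hp.le]
  have hp2242 : p ≤ 2242 := by nlinarith
  have hcp : (a+k) * p < 1270 := by
    nlinarith [hkey, mul_nonneg hc0 hp.le, mul_pos hp hpp,
      mul_nonneg (mul_nonneg hc0 hp.le) (sub_nonneg.mpr hp2242)]
  have hak : a - (a+k) = (a+k)*p/1000 := by
    linear_combination (-1/1000 : ℝ) * hca
  have hklow : -1.27 < k := by
    have h1 : (a+k)*p/1000 < 1.27 := by linarith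
    linarith
  intro a' ⟨ha'1, ha'2⟩
  have h1 : |a' + k| < 0.97 := by
    rw [abs_lt]
    constructor <;> linarith
  refine ⟨h1, ?_⟩
  obtain ⟨hl, hr⟩ := abs_lt.mp h1
  have hx2 : (a'+k)^2 < 0.9409 := by
    nlinarith [mul_pos (by linarith : (0:ℝ) < 0.97 - (a'+k))
      (by linarith : (0:ℝ) < (a'+k) + 0.97)]
  rw [div_le_iff₀ (by nlinarith : (0:ℝ) < 1 - (a'+k)^2)]
  nlinarith
end

section
/- Consider the scalar LQR problem with input gain b = 1, state cost q = 1, and input cost r = 1000, and the nominal estimate â = 1.01. If p > 0 satisfies the scalar discrete algebraic Riccati equation p = (1.01)²p − (1.01)²p²/(p + 1000) + 1 and k = −1.01·p/(p + 1000) is the corresponding certainty-equivalent LQR gain, then 1.05 + k > 1; in particular the certainty-equivalent controller synthesized from â = 1.01 fails to stabilize the true scalar system with a* = 1.05. -/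
/-- The certainty-equivalent controller synthesized from the estimate â = 1.01 fails to
stabilize the true scalar system with a* = 1.05: the closed-loop coefficient exceeds 1. -/
theorem scalar_ce_fails_to_stabilize
    (p : ℝ) (hp : 0 < p)
    (hdare : p = (1.01 : ℝ) ^ 2 * p - (1.01 : ℝ) ^ 2 * p ^ 2 / (p + 1000) + 1)
    (k : ℝ) (hk : k = -((1.01 : ℝ) * p / (p + 1000))) :
    (1.05 : ℝ) + k > 1 := by
  subst hk
  have hpos : (0:ℝ) < p + 1000 := by linarith
  have h := hdare
  field_simp at h
  have key : 1.01 * p / (p + 1000) < 0.05 := by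
    rw [div_lt_iff₀ hpos]
    nlinarith [sq_nonneg p, sq_nonneg (p - 52)]
  linarith
end
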